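/- arXiv:1302.6659 — 7 statements merged into one kernel-verified Lean document; each statement's English description precedes it below -/
import Mathlib

section
/- Let y be an integer with 0 ≤ y ≤ n−1, let v ∈ [0,1] and c ∈ (0,1), and define G(θ) = (1−v) F_θ(y−1) + v F_θ(y) for θ ∈ [0,1]. If G(0) > c (i.e., if y ≥ 1, or if y = 0 and v > c), then there exists a unique θ ∈ (0,1) with G(θ) = c. (This makes the upper endpoint of Stevens' randomized confidence interval well defined.) -/
/-- The Binomial(n, θ) probability mass function `f_θ(y) = C(n,y) θ^y (1-θ)^(n-y)`. -/
noncomputable def binomP (n : ℕ) (θ : ℝ) (y : ℕ) : ℝ :=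
  (n.choose y : ℝ) * θ ^ y * (1 - θ) ^ (n - y)

/-- `F_θ(y-1) = ∑_{j=0}^{y-1} f_θ(j)`, with the convention `F_θ(-1) = 0`. -/
noncomputable def binomCDFpred (n : ℕ) (θ : ℝ) (y : ℕ) : ℝ :=
  ∑ j ∈ Finset.range y, binomP n θ j

/-- The Binomial(n, θ) cumulative distribution function `F_θ(y) = ∑_{j=0}^{y} f_θ(j)`. -/
noncomputable def binomCDF (n : ℕ) (θ : ℝ) (y : ℕ) : ℝ :=
  ∑ j ∈ Finset.range (y + 1), binomP n θ j

lemma hasDerivAt_oneSubPow (m : ℕ) (θ : ℝ) :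
    HasDerivAt (fun t : ℝ => (1 - t) ^ m) (-(m : ℝ) * (1 - θ) ^ (m - 1)) θ := by
  have h := HasDerivAt.comp θ (hasDerivAt_pow m (1 - θ))
    ((hasDerivAt_const θ (1 : ℝ)).sub (hasDerivAt_id θ))
  refine h.congr_deriv (Eq.symm ?_)
  ring

lemma hasDerivAt_binomP_succ (n j : ℕ) (hj : j + 2 ≤ n) (θ : ℝ) :
    HasDerivAt (fun t => binomP n t (j + 1))
      ((n : ℝ) * (binomP (n - 1) θ j - binomP (n - 1) θ (j + 1))) θ := by
  have h1 : HasDerivAt (fun t : ℝ => (n.choose (j+1) : ℝ) * t ^ (j+1))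
      ((n.choose (j+1) : ℝ) * ((j+1) * θ ^ j)) θ :=
    (hasDerivAt_pow (j+1) θ).const_mul _ |>.congr_deriv (by push_cast; ring)
  have h2 := hasDerivAt_oneSubPow (n - (j+1)) θ
  have h := h1.mul h2
  have heq : (fun t => binomP n t (j+1)) = fun t => ((n.choose (j+1) : ℝ) * t ^ (j+1)) * (1 - t) ^ (n - (j+1)) := by
    funext t; simp only [binomP]
  rw [heq]
  refine h.congr_deriv (Eq.symm ?_)
  -- arithmetic of exponents and choose identities
  have e1 : n - (j+1) - 1 = n - (j+2) := by omega
  have e2 : n - 1 - j = n - (j+1) := by omega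
  have e3 : n - 1 - (j+1) = n - (j+2) := by omega
  have hs : n - 1 + 1 = n := by omega
  have c1 : (n : ℝ) * ((n-1).choose j : ℝ) = (n.choose (j+1) : ℝ) * (j+1) := by
    have hnat := Nat.add_one_mul_choose_eq (n-1) j
    simp only [Nat.succ_eq_add_one, hs] at hnat
    exact_mod_cast congrArg (Nat.cast : ℕ → ℝ) hnat
  have c2 : (n.choose (j+1) : ℝ) * ((n : ℝ) - (j+1)) = (n : ℝ) * ((n-1).choose (j+1) : ℝ) := by
    have hnat2 := Nat.add_one_mul_choose_eq (n-1) (j+1)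
    simp only [Nat.succ_eq_add_one, hs] at hnat2
    have hnat3 := Nat.choose_succ_right_eq n (j+1)
    have hnat : n * (n-1).choose (j+1) = n.choose (j+1) * (n - (j+1)) := by
      rw [hnat2]; exact hnat3
    have hcast := congrArg (Nat.cast : ℕ → ℝ) hnat
    push_cast [Nat.cast_sub (by omega : j + 1 ≤ n)] at hcast
    linarith [hcast]
  simp only [binomP, e1, e2, e3]
  have hnj : ((n : ℝ) - (j+1)) = ((n - (j+1) : ℕ) : ℝ) := by
    rw [Nat.cast_sub (by omega : j + 1 ≤ n)]; push_cast; ring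
  -- goal: n * (C(n-1,j) θ^j (1-θ)^{n-(j+1)} - C(n-1,j+1) θ^{j+1} (1-θ)^{n-(j+2)})
  --     = C(n,j+1)((j+1) θ^j) (1-θ)^{n-(j+1)} + C(n,j+1) θ^{j+1} * (-(n-(j+1)))(1-θ)^{n-(j+2)}
  rw [show ((n - (j+1) : ℕ) : ℝ) = (n : ℝ) - (j+1) from hnj.symm]
  linear_combination (θ^j * (1-θ)^(n-(j+1))) * c1 + (θ^(j+1) * (1-θ)^(n-(j+2))) * c2

lemma hasDerivAt_binomCDF (n : ℕ) (y : ℕ) (hy : y + 1 ≤ n) (θ : ℝ) :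
    HasDerivAt (fun t => binomCDF n t y) (-(n : ℝ) * binomP (n - 1) θ y) θ := by
  induction y with
  | zero =>
    have h0 : (fun t => binomCDF n t 0) = fun t : ℝ => (1 - t) ^ n := by
      funext t; simp [binomCDF, binomP]
    rw [h0]
    have := hasDerivAt_oneSubPow n θ
    convert this using 1
    simp [binomP]
  | succ k ih =>
    have hk : k + 1 ≤ n := by omega
    have hsum : (fun t => binomCDF n t (k+1)) = fun t => binomCDF n t k + binomP n t (k+1) := by
      funext t; simp [binomCDF, Finset.sum_range_succ]
    rw [hsum]
    have h := (ih hk).add (hasDerivAt_binomP_succ n k (by omega) θ)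
    refine h.congr_deriv (Eq.symm ?_)
    ring

lemma binomP_pos {m j : ℕ} (hj : j ≤ m) {θ : ℝ} (h0 : 0 < θ) (h1 : θ < 1) :
    0 < binomP m θ j := by
  have hc : 0 < (m.choose j : ℝ) := by exact_mod_cast Nat.choose_pos hj
  exact mul_pos (mul_pos hc (pow_pos h0 j)) (pow_pos (by linarith : (0:ℝ) < 1 - θ) (m - j))

lemma key_unique (G d : ℝ → ℝ) (hGd : ∀ t, HasDerivAt G (d t) t)
    (hneg : ∀ t ∈ Set.Ioo (0:ℝ) 1, d t < 0) (c : ℝ) (hc1 : G 1 < c) (hc0 : c < G 0) :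
    ∃! θ : ℝ, θ ∈ Set.Ioo (0:ℝ) 1 ∧ G θ = c := by
  have cont : Continuous G := by
    rw [continuous_iff_continuousAt]; exact fun t => (hGd t).continuousAt
  have strict : StrictAntiOn G (Set.Icc 0 1) := by
    apply strictAntiOn_of_deriv_neg (convex_Icc 0 1) cont.continuousOn
    intro x hx
    rw [interior_Icc] at hx
    rw [(hGd x).deriv]
    exact hneg x hx
  obtain ⟨θ, hθmem, hθeq⟩ :=
    intermediate_value_Icc' (zero_le_one) cont.continuousOn ⟨hc1.le, hc0.le⟩
  have hθ0 : θ ≠ 0 := by rintro rfl; rw [hθeq] at hc0; exact lt_irrefl _ hc0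
  have hθ1 : θ ≠ 1 := by rintro rfl; rw [hθeq] at hc1; exact lt_irrefl _ hc1
  have hθIoo : θ ∈ Set.Ioo (0:ℝ) 1 :=
    ⟨lt_of_le_of_ne hθmem.1 (Ne.symm hθ0), lt_of_le_of_ne hθmem.2 hθ1⟩
  refine ⟨θ, ⟨hθIoo, hθeq⟩, ?_⟩
  rintro θ' ⟨hθ'Ioo, hθ'eq⟩
  exact strict.injOn (Set.mem_Icc_of_Ioo hθ'Ioo) (Set.mem_Icc_of_Ioo hθIoo) (by rw [hθ'eq, hθeq])

/-- Let `0 ≤ y ≤ n-1`, `v ∈ [0,1]`, `c ∈ (0,1)` and `G(θ) = (1-v) F_θ(y-1) + v F_θ(y)`.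
If `G(0) > c` then there is a unique `θ ∈ (0,1)` with `G(θ) = c` (well-definedness of the
upper endpoint of Stevens' randomized confidence interval). -/
theorem stmt_2 (n : ℕ) (hn : 1 ≤ n) (y : ℕ) (hy : y ≤ n - 1)
    (v : ℝ) (hv : v ∈ Set.Icc (0 : ℝ) 1) (c : ℝ) (hc : c ∈ Set.Ioo (0 : ℝ) 1)
    (hG0 : (1 - v) * binomCDFpred n 0 y + v * binomCDF n 0 y > c) :
    ∃! θ : ℝ, θ ∈ Set.Ioo (0 : ℝ) 1 ∧
      (1 - v) * binomCDFpred n θ y + v * binomCDF n θ y = c := by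
  have hy' : y + 1 ≤ n := by omega
  set G : ℝ → ℝ := fun t => (1 - v) * binomCDFpred n t y + v * binomCDF n t y with hGdef
  have hG1 : G 1 = 0 := by
    have hz : ∀ j ∈ Finset.range (y + 1), binomP n 1 j = 0 := by
      intro j hj
      rw [Finset.mem_range] at hj
      have : n - j ≠ 0 := by omega
      simp [binomP, zero_pow this]
    have h1 : binomCDF n 1 y = 0 := Finset.sum_eq_zero hz
    have h2 : binomCDFpred n 1 y = 0 :=
      Finset.sum_eq_zero fun j hj => hz j (Finset.mem_range.mpr (by
        rw [Finset.mem_range] at hj; omega))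
    simp [hGdef, h1, h2]
  rcases y with _ | k
  · -- y = 0
    have hpred0 : ∀ t : ℝ, binomCDFpred n t 0 = 0 := fun t => by simp [binomCDFpred]
    have hv0 : c < v := by
      have h00 : binomCDF n 0 0 = 1 := by simp [binomCDF, binomP]
      rw [hpred0 0, h00] at hG0; linarith
    have hvpos : 0 < v := lt_trans hc.1 hv0
    have hGd : ∀ t : ℝ, HasDerivAt G (v * (-(n:ℝ) * binomP (n-1) t 0)) t := by
      intro t
      have h := (hasDerivAt_binomCDF n 0 hy' t).const_mul v
      have hfun : G = fun t => v * binomCDF n t 0 := funext fun t => by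
        simp [hGdef, hpred0]
      rw [hfun]
      exact h
    apply key_unique G _ hGd _ c (by rw [hG1]; exact hc.1) (by simpa [hGdef] using hG0)
    intro t ht
    have hP := binomP_pos (Nat.zero_le (n-1)) ht.1 ht.2
    have hn0 : (0:ℝ) < n := by exact_mod_cast hn
    have : 0 < (n:ℝ) * binomP (n-1) t 0 := mul_pos hn0 hP
    nlinarith
  · -- y = k + 1
    have hGd : ∀ t : ℝ, HasDerivAt G
        ((1-v) * (-(n:ℝ) * binomP (n-1) t k) + v * (-(n:ℝ) * binomP (n-1) t (k+1))) t := by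
      intro t
      have h1 := (hasDerivAt_binomCDF n k (by omega) t).const_mul (1-v)
      have h2 := (hasDerivAt_binomCDF n (k+1) hy' t).const_mul v
      have hfun : G = fun t => (1-v) * binomCDF n t k + v * binomCDF n t (k+1) :=
        funext fun t => rfl
      rw [hfun]
      exact h1.add h2
    apply key_unique G _ hGd _ c (by rw [hG1]; exact hc.1) hG0
    intro t ht
    have hPk := binomP_pos (by omega : k ≤ n - 1) ht.1 ht.2
    have hPk1 := binomP_pos (by omega : k + 1 ≤ n - 1) ht.1 ht.2
    have hn0 : (0:ℝ) < n := by exact_mod_cast hn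
    rcases eq_or_lt_of_le hv.2 with h1 | h1
    · subst h1; simp; nlinarith
    · have hpos : 0 < (1-v) * binomP (n-1) t k + v * binomP (n-1) t (k+1) :=
        add_pos_of_pos_of_nonneg (mul_pos (by linarith) hPk)
          (mul_nonneg hv.1 hPk1.le)
      nlinarith
end

section
/- Let α ∈ (0,1) and θ ∈ (0,1). Suppose ℓ : {0,…,n} × [0,1] → [0,1] satisfies: ℓ(0,v) = 0 whenever v ≤ 1−α/2; ℓ(n,v) = 1 whenever v ≥ 1−α/2; and in all other cases (1−v)(1 − F_{ℓ(y,v)}(y−1)) + v (1 − F_{ℓ(y,v)}(y)) = α/2. Then Σ_{y=0}^{n} f_θ(y) · Leb({v ∈ [0,1] : ℓ(y,v) > θ}) = α/2, where Leb denotes Lebesgue measure on [0,1]; that is, Stevens' randomized lower endpoint satisfies P_θ(θ < ℓ(Y,V)) = α/2 exactly, for Y Binomial(n,θ) and V uniform on (0,1) independent of Y. -/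
open MeasureTheory

noncomputable def binomD (n : ℕ) (t : ℝ) (j : ℕ) : ℝ :=
  (j : ℝ) * (n.choose j : ℝ) * t ^ (j - 1) * (1 - t) ^ (n - j)

lemma hasDerivAt_binomP (n : ℕ) {j : ℕ} (hj : j ≤ n) (t : ℝ) :
    HasDerivAt (fun s => binomP n s j) (binomD n t j - binomD n t (j + 1)) t := by
  have key : (fun s => binomP n s j)
      = fun s : ℝ => (n.choose j : ℝ) * (s ^ j * (1 - s) ^ (n - j)) := by
    funext s; simp [binomP]; ring
  rw [key]
  have h1 : HasDerivAt (fun s : ℝ => s ^ j) ((j : ℝ) * t ^ (j - 1)) t := hasDerivAt_pow j t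
  have h2 : HasDerivAt (fun s : ℝ => (1 - s) ^ (n - j))
      (-(((n - j : ℕ) : ℝ) * (1 - t) ^ (n - j - 1))) t := by
    have hinner : HasDerivAt (fun s : ℝ => 1 - s) (-1) t := by
      simpa using (hasDerivAt_id t).const_sub 1
    have := (hasDerivAt_pow (n - j) (1 - t)).comp t hinner
    refine this.congr_deriv ?_; ring
  have h3 := (h1.mul h2).const_mul ((n.choose j : ℝ))
  refine h3.congr_deriv (Eq.symm ?_)
  have hc : ((j : ℝ) + 1) * (n.choose (j + 1) : ℝ) = (n.choose j : ℝ) * ((n : ℝ) - j) := by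
    have h := congrArg (Nat.cast : ℕ → ℝ) (Nat.choose_succ_right_eq n j)
    push_cast [Nat.cast_sub hj] at h
    linarith
  simp only [binomD]
  have e1 : (j + 1) - 1 = j := rfl
  have e2 : n - (j + 1) = n - j - 1 := by omega
  have e3 : ((n - j : ℕ) : ℝ) = (n : ℝ) - j := by push_cast [Nat.cast_sub hj]; ring
  rw [e1, e2, e3]
  push_cast
  linear_combination (-(t ^ j * (1 - t) ^ (n - j - 1))) * hc

lemma sum_binomP (n : ℕ) (θ : ℝ) : ∑ j ∈ Finset.range (n + 1), binomP n θ j = 1 := by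
  have h := add_pow θ (1 - θ) n
  have h2 : (θ + (1 - θ)) ^ n = 1 := by norm_num
  rw [h2] at h
  rw [h]
  apply Finset.sum_congr rfl
  intro j _
  simp [binomP]; ring

lemma hasDerivAt_g (n y : ℕ) (hy : y ≤ n) (v t : ℝ) :
    HasDerivAt (fun t : ℝ => (1 - v) * (1 - binomCDFpred n t y) + v * (1 - binomCDF n t y))
      ((1 - v) * binomD n t y + v * binomD n t (y + 1)) t := by
  have hp : HasDerivAt (fun t : ℝ => binomCDFpred n t y)
      (binomD n t 0 - binomD n t y) t := by
    have := HasDerivAt.fun_sum (u := Finset.range y)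
      (fun j hj => hasDerivAt_binomP n (show j ≤ n by
        have := Finset.mem_range.mp hj; omega) t)
    simpa [binomCDFpred, Finset.sum_range_sub' (fun i => binomD n t i)] using this
  have hq : HasDerivAt (fun t : ℝ => binomCDF n t y)
      (binomD n t 0 - binomD n t (y + 1)) t := by
    have := HasDerivAt.fun_sum (u := Finset.range (y + 1))
      (fun j hj => hasDerivAt_binomP n (show j ≤ n by
        have := Finset.mem_range.mp hj; omega) t)
    simpa [binomCDF, Finset.sum_range_sub' (fun i => binomD n t i)] using this
  have hD0 : binomD n t 0 = 0 := by simp [binomD]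
  have := ((hp.const_sub 1).const_mul (1 - v)).add ((hq.const_sub 1).const_mul v)
  refine this.congr_deriv ?_
  rw [hD0]; ring

lemma binomD_pos (n : ℕ) {j : ℕ} (h1 : 1 ≤ j) (h2 : j ≤ n) {t : ℝ}
    (ht : t ∈ Set.Ioo (0 : ℝ) 1) : 0 < binomD n t j := by
  have hc : 0 < (n.choose j : ℝ) := by exact_mod_cast Nat.choose_pos h2
  have h3 : (0:ℝ) < j := by exact_mod_cast h1
  have := ht.1; have := ht.2
  have h4 : (0:ℝ) < 1 - t := by linarith
  unfold binomD
  positivity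

lemma binomD_nonneg (n : ℕ) (j : ℕ) {t : ℝ}
    (ht : t ∈ Set.Ioo (0 : ℝ) 1) : 0 ≤ binomD n t j := by
  have := ht.1; have := ht.2
  have h4 : (0:ℝ) < 1 - t := by linarith
  unfold binomD
  positivity

lemma strictMono_g (n y : ℕ) (hn : 1 ≤ n) (hy : y ≤ n) {v : ℝ} (hv : v ∈ Set.Icc (0 : ℝ) 1)
    (h1 : 0 < v ∨ 1 ≤ y) (h2 : v < 1 ∨ y < n) :
    StrictMonoOn (fun t : ℝ => (1 - v) * (1 - binomCDFpred n t y) + v * (1 - binomCDF n t y))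
      (Set.Icc (0 : ℝ) 1) := by
  apply strictMonoOn_of_deriv_pos (convex_Icc 0 1)
  · exact fun x _ => (hasDerivAt_g n y hy v x).differentiableAt.continuousAt.continuousWithinAt
  · intro x hx
    rw [interior_Icc] at hx
    rw [(hasDerivAt_g n y hy v x).deriv]
    have hvn : 0 ≤ v := hv.1
    have hvo : v ≤ 1 := hv.2
    rcases lt_or_ge y n with hyn | hyn
    · rcases h1 with hv0 | hy1
      · have := binomD_pos n (by omega : 1 ≤ y + 1) (by omega : y + 1 ≤ n) hx
        have h5 := binomD_nonneg n y hx
        nlinarith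
      · have := binomD_pos n hy1 hy hx
        have h5 := binomD_nonneg n (y + 1) hx
        rcases lt_or_ge v 1 with hv1 | hv1
        · nlinarith
        · have hv1' : v = 1 := le_antisymm hvo hv1
          subst hv1'
          have := binomD_pos n (by omega : 1 ≤ y + 1) (by omega : y + 1 ≤ n) hx
          nlinarith
    · have hyn' : y = n := by omega
      have hv1 : v < 1 := by
        rcases h2 with h | h
        · exact h
        · exact absurd h (not_lt.mpr hyn)
      have := binomD_pos n (by omega : 1 ≤ y) hy hx
      have h5 := binomD_nonneg n (y + 1) hx
      nlinarith

lemma measure_aux (t : ℝ) :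
    (volume {v : ℝ | v ∈ Set.Icc (0 : ℝ) 1 ∧ t < v}).toReal = max 0 (min 1 (1 - t)) := by
  rcases lt_or_ge t 0 with h | h
  · have hs : {v : ℝ | v ∈ Set.Icc (0 : ℝ) 1 ∧ t < v} = Set.Icc 0 1 := by
      ext v
      simp only [Set.mem_setOf_eq, Set.mem_Icc]
      constructor
      · rintro ⟨h1, _⟩; exact h1
      · rintro ⟨h1, h2⟩; exact ⟨⟨h1, h2⟩, lt_of_lt_of_le h h1⟩
    have e1 : min (1:ℝ) (1 - t) = 1 := min_eq_left (by linarith)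
    rw [hs, Real.volume_Icc, e1, max_eq_right (by norm_num : (0:ℝ) ≤ 1)]
    norm_num
  · rcases le_or_gt t 1 with h1 | h1
    · have hs : {v : ℝ | v ∈ Set.Icc (0 : ℝ) 1 ∧ t < v} = Set.Ioc t 1 := by
        ext v
        simp only [Set.mem_setOf_eq, Set.mem_Icc, Set.mem_Ioc]
        constructor
        · rintro ⟨⟨_, hb⟩, hc⟩; exact ⟨hc, hb⟩
        · rintro ⟨ha, hb⟩; exact ⟨⟨le_of_lt (lt_of_le_of_lt h ha), hb⟩, ha⟩
      have e1 : min (1:ℝ) (1 - t) = 1 - t := min_eq_right (by linarith)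
      have e2 : max (0:ℝ) (1 - t) = 1 - t := max_eq_right (by linarith)
      rw [hs, Real.volume_Ioc, e1, e2]
      exact ENNReal.toReal_ofReal (by linarith)
    · have hs : {v : ℝ | v ∈ Set.Icc (0 : ℝ) 1 ∧ t < v} = ∅ := by
        ext v
        simp only [Set.mem_setOf_eq, Set.mem_Icc, Set.mem_empty_iff_false, iff_false]
        rintro ⟨⟨_, hb⟩, hc⟩; linarith
      have e1 : min (1:ℝ) (1 - t) = 1 - t := min_eq_right (by linarith)
      have e2 : max (0:ℝ) (1 - t) = 0 := max_eq_left (by linarith)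
      rw [hs, e1, e2]
      simp

lemma tele (a f : ℝ) (hf : 0 ≤ f) : max 0 (min f (a + f)) = max 0 (a + f) - max 0 a := by
  rcases le_total a 0 with ha | ha
  · have h3 : max 0 a = 0 := max_eq_left ha
    have h1 : min f (a + f) = a + f := min_eq_right (by linarith)
    rcases le_total (a + f) 0 with hb | hb
    · have h2 : max 0 (a + f) = 0 := max_eq_left hb
      rw [h1, h2, h3]; ring
    · have h2 : max 0 (a + f) = a + f := max_eq_right hb
      rw [h1, h2, h3]; ring
  · have h1 : min f (a + f) = f := min_eq_left (by linarith)
    have h2 : max 0 (a + f) = a + f := max_eq_right (by linarith)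
    have h3 : max 0 a = a := max_eq_right ha
    have h4 : max 0 f = f := max_eq_right hf
    rw [h1, h2, h3, h4]; ring

/-- Stevens' randomized lower endpoint `ℓ(y,v)` — equal to `0` for `y = 0, v ≤ 1-α/2`, to `1`
for `y = n, v ≥ 1-α/2`, and otherwise solving `(1-v)(1 - F_θ(y-1)) + v(1 - F_θ(y)) = α/2` —
satisfies `P_θ(θ < ℓ(Y,V)) = α/2` exactly, for `Y ~ Binomial(n,θ)` and `V ~ U(0,1)`
independent. -/
theorem stmt_7 (n : ℕ) (hn : 1 ≤ n) (α : ℝ) (hα : α ∈ Set.Ioo (0 : ℝ) 1)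
    (θ : ℝ) (hθ : θ ∈ Set.Ioo (0 : ℝ) 1)
    (l : ℕ → ℝ → ℝ)
    (hl01 : ∀ y ≤ n, ∀ v ∈ Set.Icc (0 : ℝ) 1, l y v ∈ Set.Icc (0 : ℝ) 1)
    (hl0 : ∀ v ∈ Set.Icc (0 : ℝ) 1, v ≤ 1 - α / 2 → l 0 v = 0)
    (hln : ∀ v ∈ Set.Icc (0 : ℝ) 1, 1 - α / 2 ≤ v → l n v = 1)
    (hl : ∀ y ≤ n, ∀ v ∈ Set.Icc (0 : ℝ) 1,
      ¬(y = 0 ∧ v ≤ 1 - α / 2) → ¬(y = n ∧ 1 - α / 2 ≤ v) →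
      (1 - v) * (1 - binomCDFpred n (l y v) y) + v * (1 - binomCDF n (l y v) y) = α / 2) :
    ∑ y ∈ Finset.range (n + 1),
      binomP n θ y *
        (volume {v : ℝ | v ∈ Set.Icc (0 : ℝ) 1 ∧ θ < l y v}).toReal = α / 2 := by
  obtain ⟨hα0, hα1⟩ := hα
  obtain ⟨hθ0, hθ1⟩ := hθ
  have hθI : θ ∈ Set.Icc (0 : ℝ) 1 := ⟨le_of_lt hθ0, le_of_lt hθ1⟩
  have hfpos : ∀ y ≤ n, 0 < binomP n θ y := by
    intro y hy
    have hc : 0 < (n.choose y : ℝ) := by exact_mod_cast Nat.choose_pos hy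
    have h4 : (0 : ℝ) < 1 - θ := by linarith
    unfold binomP
    positivity
  have hsum := sum_binomP n θ
  have gval : ∀ y, ∀ t v : ℝ,
      (1 - v) * (1 - binomCDFpred n t y) + v * (1 - binomCDF n t y)
        = (1 - binomCDFpred n t y) - v * binomP n t y := by
    intro y t v
    have h : binomCDF n t y = binomCDFpred n t y + binomP n t y := by
      simp [binomCDF, binomCDFpred, Finset.sum_range_succ]
    rw [h]; ring
  have key : ∀ y, y ≤ n → ∀ v ∈ Set.Icc (0 : ℝ) 1,
      (θ < l y v ↔ (1 - binomCDFpred n θ y) - v * binomP n θ y < α / 2) := by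
    intro y hy v hv
    have hlI : l y v ∈ Set.Icc (0 : ℝ) 1 := hl01 y hy v hv
    by_cases hy0 : y = 0
    · subst hy0
      have hP0 : binomCDFpred n θ 0 = 0 := by simp [binomCDFpred]
      have hf0 : binomP n θ 0 = (1 - θ) ^ n := by simp [binomP]
      have hf1 : binomP n θ 0 ≤ 1 := by
        rw [hf0]; exact pow_le_one₀ (by linarith) (by linarith)
      have hcase : ∀ hv2 : 1 - α / 2 < v,
          (θ < l 0 v ↔ (1 - binomCDFpred n θ 0) - v * binomP n θ 0 < α / 2) := by
        intro hv2
        have heq := hl 0 (by omega) v hv (fun hh => absurd hh.2 (not_le.mpr hv2))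
          (fun hh => absurd hh.1 (by omega))
        have hmono := strictMono_g n 0 hn (by omega) hv (Or.inl (by linarith))
          (Or.inr (by omega))
        have h := hmono.lt_iff_lt hθI hlI
        simp only [gval] at h
        rw [gval] at heq
        rw [← heq]
        exact h.symm
      constructor
      · intro hlt
        have hv2 : 1 - α / 2 < v := by
          by_contra hcon
          push_neg at hcon
          rw [hl0 v hv hcon] at hlt
          linarith
        exact (hcase hv2).mp hlt
      · intro hlt2
        have hv2 : 1 - α / 2 < v := by
          rw [hP0] at hlt2
          nlinarith [hv.1, hfpos 0 (by omega)]
        exact (hcase hv2).mpr hlt2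
    · by_cases hyn : y = n
      · rw [hyn] at hlI ⊢
        have hPn : 1 - binomCDFpred n θ n = binomP n θ n := by
          have h2 : binomCDFpred n θ n + binomP n θ n = 1 := by
            have h := hsum
            rw [Finset.sum_range_succ] at h
            simpa [binomCDFpred] using h
          linarith
        have hfn1 : binomP n θ n < 1 := by
          have h2 : binomP n θ n = θ ^ n := by simp [binomP]
          rw [h2]
          exact pow_lt_one₀ (le_of_lt hθ0) hθ1 (by omega)
        have hfn0 : 0 < binomP n θ n := hfpos n le_rfl
        rw [hPn]
        have hcase : ∀ hc : v < 1 - α / 2,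
            (θ < l n v ↔ binomP n θ n - v * binomP n θ n < α / 2) := by
          intro hc
          have heq := hl n (le_refl n) v hv (fun hh => absurd hh.1 (by omega))
            (fun hh => absurd hh.2 (not_le.mpr hc))
          have hmono := strictMono_g n n hn le_rfl hv (Or.inr hn)
            (Or.inl (by linarith))
          have h := hmono.lt_iff_lt hθI hlI
          simp only [gval] at h
          rw [gval] at heq
          rw [hPn] at h
          rw [← heq]
          exact h.symm
        constructor
        · intro hlt
          rcases le_or_gt (1 - α / 2) v with hc | hc
          · rcases lt_or_eq_of_le hv.2 with hv1 | hv1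
            · nlinarith
            · rw [hv1]; nlinarith
          · exact (hcase hc).mp hlt
        · intro hlt2
          rcases le_or_gt (1 - α / 2) v with hc | hc
          · rw [hln v hv hc]; exact hθ1
          · exact (hcase hc).mpr hlt2
      · have heq := hl y hy v hv (fun hh => hy0 hh.1) (fun hh => hyn hh.1)
        have hmono := strictMono_g n y hn hy hv (Or.inr (by omega))
          (Or.inr (by omega))
        have h := hmono.lt_iff_lt hθI hlI
        simp only [gval] at h
        rw [gval] at heq
        rw [← heq]
        exact h.symm
  have main : ∀ y ∈ Finset.range (n + 1),
      binomP n θ y * (volume {v : ℝ | v ∈ Set.Icc (0 : ℝ) 1 ∧ θ < l y v}).toReal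
        = max 0 (α / 2 - (1 - binomCDFpred n θ (y + 1)))
          - max 0 (α / 2 - (1 - binomCDFpred n θ y)) := by
    intro y hy'
    have hy : y ≤ n := by
      have := Finset.mem_range.mp hy'; omega
    have hf := hfpos y hy
    have hA1 : binomCDFpred n θ (y + 1) = binomCDFpred n θ y + binomP n θ y := by
      simp [binomCDFpred, Finset.sum_range_succ]
    have hset : {v : ℝ | v ∈ Set.Icc (0 : ℝ) 1 ∧ θ < l y v}
        = {v : ℝ | v ∈ Set.Icc (0 : ℝ) 1 ∧
            ((1 - binomCDFpred n θ y) - α / 2) / binomP n θ y < v} := by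
      ext v
      simp only [Set.mem_setOf_eq]
      refine and_congr_right fun hv => ?_
      rw [key y hy v hv, div_lt_iff₀ hf]
      constructor
      · intro h; nlinarith
      · intro h; nlinarith
    rw [hset, measure_aux]
    have h1 : binomP n θ y * max 0 (min 1
        (1 - ((1 - binomCDFpred n θ y) - α / 2) / binomP n θ y))
        = max 0 (min (binomP n θ y)
            ((α / 2 - (1 - binomCDFpred n θ y)) + binomP n θ y)) := by
      rw [mul_max_of_nonneg _ _ hf.le, mul_min_of_nonneg _ _ hf.le]
      rw [mul_zero, mul_one]
      congr 2
      field_simp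
      ring
    rw [h1, hA1]
    have e : α / 2 - (1 - (binomCDFpred n θ y + binomP n θ y))
        = (α / 2 - (1 - binomCDFpred n θ y)) + binomP n θ y := by ring
    rw [e]
    exact tele _ _ hf.le
  rw [Finset.sum_congr rfl main,
    Finset.sum_range_sub (fun y => max 0 (α / 2 - (1 - binomCDFpred n θ y)))]
  have hend : binomCDFpred n θ (n + 1) = 1 := hsum
  have h0 : binomCDFpred n θ 0 = 0 := by simp [binomCDFpred]
  rw [hend, h0]
  rw [max_eq_right (by linarith), max_eq_left (by linarith)]
  ring
end

section
/- Let y be an integer with 0 ≤ y ≤ n, let 0 ≤ v₁ < v₂ ≤ 1, and let c ∈ (0,1). If θ₁, θ₂ ∈ (0,1) satisfy (1−v₁) F_{θ₁}(y−1) + v₁ F_{θ₁}(y) = c and (1−v₂) F_{θ₂}(y−1) + v₂ F_{θ₂}(y) = c, then θ₁ < θ₂. (The upper endpoint u_R(y,v) of the randomized confidence interval is strictly increasing in v.) -/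
lemma binomP_hasDerivAt (n j : ℕ) (θ : ℝ) :
    HasDerivAt (fun t : ℝ => binomP n t j)
      ((n.choose j : ℝ) * (((j:ℝ) * θ ^ (j-1)) * (1-θ) ^ (n-j)
        + θ ^ j * -(((n-j : ℕ):ℝ) * (1-θ) ^ (n-j-1)))) θ := by
  have h1 : HasDerivAt (fun t : ℝ => t ^ j) ((j:ℝ) * θ ^ (j-1)) θ := hasDerivAt_pow j θ
  have h2 : HasDerivAt (fun t : ℝ => (1-t) ^ (n-j))
      (-(((n-j : ℕ):ℝ) * (1-θ) ^ (n-j-1))) θ := by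
    have hin : HasDerivAt (fun t : ℝ => 1 - t) (-1 : ℝ) θ := by
      simpa using (hasDerivAt_id θ).const_sub 1
    have := (hasDerivAt_pow (n-j) (1-θ)).comp θ hin
    exact this.congr_deriv (by ring)
  have := ((h1.mul h2).const_mul ((n.choose j : ℝ)))
  rw [show (fun t : ℝ => binomP n t j) = fun t => (n.choose j : ℝ) * (t ^ j * (1 - t) ^ (n - j)) from
    funext fun t => by unfold binomP; ring]
  exact this

lemma cdf_hasDerivAt (n m : ℕ) (hn : 1 ≤ n) (hm : m ≤ n) (θ : ℝ) :
    HasDerivAt (fun t : ℝ => ∑ j ∈ Finset.range (m+1), binomP n t j)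
      (-((n:ℝ) * ((n-1).choose m : ℝ) * θ ^ m * (1-θ) ^ (n-1-m))) θ := by
  induction m with
  | zero =>
    convert binomP_hasDerivAt n 0 θ using 1
    · funext t; rw [Finset.sum_range_one]
    · simp
  | succ m ih =>
    have hm' : m ≤ n := by omega
    have hsum := (ih hm').add (binomP_hasDerivAt n (m+1) θ)
    obtain ⟨k, rfl⟩ : ∃ k, n = k + 1 := ⟨n-1, by omega⟩
    simp only [Nat.add_sub_cancel] at *
    have key1 : ((k+1:ℕ):ℝ) * ((k.choose m : ℕ) : ℝ) = (((k+1).choose (m+1) : ℕ) : ℝ) * ((m+1 : ℕ) : ℝ) := by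
      exact_mod_cast congrArg (Nat.cast : ℕ → ℝ) (Nat.add_one_mul_choose_eq k m)
    have key2 : (((k+1).choose (m+1) : ℕ) : ℝ) * ((k - m : ℕ) : ℝ)
        = ((k+1:ℕ):ℝ) * ((k.choose (m+1) : ℕ) : ℝ) := by
      have h1 := Nat.choose_succ_right_eq (k+1) (m+1)
      have h2 := Nat.add_one_mul_choose_eq k (m+1)
      simp only [Nat.succ_eq_add_one, Nat.add_sub_cancel,
        show k + 1 - (m+1) = k - m by omega] at h1 h2
      have : (k+1).choose (m+1) * (k - m) = (k+1) * k.choose (m+1) := by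
        rw [← h1, ← h2]
      exact_mod_cast congrArg (Nat.cast : ℕ → ℝ) this
    rw [show k + 1 - (m+1) = k - m by omega,
        show k - m - 1 = k - (m+1) by omega] at hsum
    rw [show k - (m+1) = k - m - 1 by omega]
    rw [show (fun t : ℝ => ∑ j ∈ Finset.range (m+1+1), binomP (k+1) t j) = fun t => ∑ j ∈ Finset.range (m+1), binomP (k+1) t j + binomP (k+1) t (m+1) from
      funext fun t => Finset.sum_range_succ _ _]
    refine hsum.congr_deriv (Eq.symm ?_)
    rw [show k - (m+1) = k - m - 1 by omega] at *
    linear_combination (θ^m * (1-θ)^(k-m)) * key1 + (θ^(m+1) * (1-θ)^(k-m-1)) * key2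

lemma partial_antitoneOn (n k : ℕ) (hn : 1 ≤ n) (hk : k ≤ n + 1) :
    AntitoneOn (fun θ : ℝ => ∑ j ∈ Finset.range k, binomP n θ j) (Set.Icc (0:ℝ) 1) := by
  cases k with
  | zero => simp [AntitoneOn]
  | succ m =>
    have hm : m ≤ n := by omega
    apply antitoneOn_of_deriv_nonpos (convex_Icc 0 1)
    · exact (Continuous.continuousOn (by
        exact continuous_finset_sum _ fun j _ => by
          have : Continuous fun t : ℝ => binomP n t j := by
            unfold binomP; fun_prop
          exact this))
    · intro x hx
      exact ((cdf_hasDerivAt n m hn hm x).differentiableAt).differentiableWithinAt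
    · intro x hx
      rw [interior_Icc] at hx
      rw [(cdf_hasDerivAt n m hn hm x).deriv]
      have h1 : (0:ℝ) ≤ (n:ℝ) * ((n-1).choose m : ℝ) * x ^ m * (1-x) ^ (n-1-m) := by
        have hx0 : (0:ℝ) ≤ x := le_of_lt hx.1
        have hx1 : (0:ℝ) ≤ 1 - x := by linarith [hx.2]
        positivity
      linarith

lemma binomP_pos_s10 (n y : ℕ) (hy : y ≤ n) {θ : ℝ} (hθ : θ ∈ Set.Ioo (0:ℝ) 1) :
    0 < binomP n θ y := by
  unfold binomP
  have h1 : 0 < (n.choose y : ℝ) := by exact_mod_cast Nat.choose_pos hy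
  have h2 : 0 < θ := hθ.1
  have h3 : 0 < 1 - θ := by linarith [hθ.2]
  positivity

/-- For `0 ≤ y ≤ n`, `0 ≤ v₁ < v₂ ≤ 1`, `c ∈ (0,1)`: if `θ₁, θ₂ ∈ (0,1)` satisfy
`(1-v₁) F_{θ₁}(y-1) + v₁ F_{θ₁}(y) = c` and `(1-v₂) F_{θ₂}(y-1) + v₂ F_{θ₂}(y) = c`, then
`θ₁ < θ₂` (the randomized upper endpoint `u_R(y,v)` is strictly increasing in `v`). -/
theorem stmt_10 (n : ℕ) (hn : 1 ≤ n) (y : ℕ) (hy : y ≤ n)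
    (v₁ v₂ : ℝ) (hv₁ : 0 ≤ v₁) (hv₁₂ : v₁ < v₂) (hv₂ : v₂ ≤ 1)
    (c : ℝ) (hc : c ∈ Set.Ioo (0 : ℝ) 1)
    (θ₁ θ₂ : ℝ) (hθ₁ : θ₁ ∈ Set.Ioo (0 : ℝ) 1) (hθ₂ : θ₂ ∈ Set.Ioo (0 : ℝ) 1)
    (h1 : (1 - v₁) * binomCDFpred n θ₁ y + v₁ * binomCDF n θ₁ y = c)
    (h2 : (1 - v₂) * binomCDFpred n θ₂ y + v₂ * binomCDF n θ₂ y = c) :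
    θ₁ < θ₂ := by
  by_contra hcon
  push_neg at hcon
  have hm1 : θ₁ ∈ Set.Icc (0:ℝ) 1 := ⟨le_of_lt hθ₁.1, le_of_lt hθ₁.2⟩
  have hm2 : θ₂ ∈ Set.Icc (0:ℝ) 1 := ⟨le_of_lt hθ₂.1, le_of_lt hθ₂.2⟩
  have hP : binomCDFpred n θ₁ y ≤ binomCDFpred n θ₂ y :=
    partial_antitoneOn n y hn (by omega) hm2 hm1 hcon
  have hF : binomCDF n θ₁ y ≤ binomCDF n θ₂ y :=
    partial_antitoneOn n (y+1) hn (by omega) hm2 hm1 hcon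
  have hf : 0 < binomP n θ₁ y := binomP_pos_s10 n y hy hθ₁
  have hFP : binomCDF n θ₁ y = binomCDFpred n θ₁ y + binomP n θ₁ y :=
    Finset.sum_range_succ _ _
  have hv₂0 : 0 < v₂ := lt_of_le_of_lt hv₁ hv₁₂
  nlinarith [mul_le_mul_of_nonneg_left hP (by linarith : (0:ℝ) ≤ 1 - v₂),
    mul_le_mul_of_nonneg_left hF (le_of_lt hv₂0),
    mul_pos (by linarith : (0:ℝ) < v₂ - v₁) hf]
end

section
/- Let θ ∈ (0,1), and let M : {0,…,n} → ℕ with M(y) ≥ 1 for all y. Then for every t ∈ [0,1], Σ_{y=0}^{n} Σ_{k=1}^{M(y)} (f_θ(y)/M(y)) · 𝟙[(k/M(y))·f_θ(y) + F_θ(y−1) ≤ t] ≤ t. (If, conditional on Y = y, W is uniformly distributed on {1/M(y), 2/M(y), …, M(y)/M(y)}, then the discrete randomized upper-tail p-value W·f_θ(Y) + F_θ(Y−1) is stochastically larger than a Uniform(0,1) random variable.) -/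
/-- For `θ ∈ (0,1)`, `M : {0,…,n} → ℕ` with `M(y) ≥ 1`, and every `t ∈ [0,1]`:
`∑_{y=0}^{n} ∑_{k=1}^{M(y)} (f_θ(y)/M(y)) 𝟙[(k/M(y)) f_θ(y) + F_θ(y-1) ≤ t] ≤ t`
(the discrete randomized upper-tail p-value `W f_θ(Y) + F_θ(Y-1)` is stochastically larger
than a `U(0,1)` random variable). -/
theorem stmt_13 (n : ℕ) (hn : 1 ≤ n) (θ : ℝ) (hθ : θ ∈ Set.Ioo (0 : ℝ) 1)
    (M : ℕ → ℕ) (hM : ∀ y ≤ n, 1 ≤ M y) (t : ℝ) (ht : t ∈ Set.Icc (0 : ℝ) 1) :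
    ∑ y ∈ Finset.range (n + 1), ∑ k ∈ Finset.Icc 1 (M y),
      binomP n θ y / (M y : ℝ) *
        (if (k : ℝ) / (M y : ℝ) * binomP n θ y + binomCDFpred n θ y ≤ t
          then (1 : ℝ) else 0) ≤ t := by
  obtain ⟨hθ0, hθ1⟩ := hθ
  obtain ⟨ht0, ht1⟩ := ht
  have key : ∀ y ∈ Finset.range (n + 1),
      (∑ k ∈ Finset.Icc 1 (M y), binomP n θ y / (M y : ℝ) *
        (if (k : ℝ) / (M y : ℝ) * binomP n θ y + binomCDFpred n θ y ≤ t
          then (1 : ℝ) else 0))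
      ≤ min t (binomCDFpred n θ (y + 1)) - min t (binomCDFpred n θ y) := by
    intro y hy
    rw [Finset.mem_range, Nat.lt_succ_iff] at hy
    have hMy : (0 : ℝ) < (M y : ℝ) := by exact_mod_cast hM y hy
    have hc1 : 0 < (n.choose y : ℝ) := by exact_mod_cast Nat.choose_pos hy
    have h2 : (0 : ℝ) < 1 - θ := by linarith
    have hf : 0 < binomP n θ y := by unfold binomP; positivity
    have hstep : binomCDFpred n θ (y + 1) = binomCDFpred n θ y + binomP n θ y :=
      Finset.sum_range_succ _ y
    set F := binomCDFpred n θ y with hF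
    set f := binomP n θ y with hfd
    rw [← Finset.mul_sum, Finset.sum_boole]
    set s := Finset.filter
      (fun k : ℕ => (k : ℝ) / (M y : ℝ) * f + F ≤ t) (Finset.Icc 1 (M y)) with hs
    rcases Finset.eq_empty_or_nonempty s with hse | hsne
    · rw [hse]
      simp only [Finset.card_empty, Nat.cast_zero, mul_zero]
      have : F ≤ binomCDFpred n θ (y + 1) := by rw [hstep]; linarith
      have := min_le_min (le_refl t) this
      linarith [min_le_min (le_refl t) (by rw [hstep]; linarith : F ≤ binomCDFpred n θ (y+1))]
    · -- max element
      set k := s.max' hsne with hk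
      have hkmem : k ∈ s := s.max'_mem hsne
      have hks : s ⊆ Finset.Icc 1 k := by
        intro x hx
        have hx1 : x ∈ Finset.Icc 1 (M y) := Finset.mem_filter.mp hx |>.1
        exact Finset.mem_Icc.mpr ⟨(Finset.mem_Icc.mp hx1).1, s.le_max' x hx⟩
      have hcard : s.card ≤ k := by
        have := Finset.card_le_card hks
        simpa using this
      have hkM : k ≤ M y := (Finset.mem_Icc.mp (Finset.mem_filter.mp hkmem).1).2
      have hkcond : (k : ℝ) / (M y : ℝ) * f + F ≤ t := (Finset.mem_filter.mp hkmem).2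
      have hkpos : (0 : ℝ) ≤ (k : ℝ) / (M y : ℝ) * f := by positivity
      have hFt : F ≤ t := by linarith
      have hcardk : (s.card : ℝ) ≤ (k : ℝ) := by exact_mod_cast hcard
      have hkMr : (k : ℝ) ≤ (M y : ℝ) := by exact_mod_cast hkM
      have hmain : f / (M y : ℝ) * (s.card : ℝ) + F ≤ t := by
        have : f / (M y : ℝ) * (s.card : ℝ) ≤ (k : ℝ) / (M y : ℝ) * f := by
          rw [div_mul_eq_mul_div, div_mul_eq_mul_div, div_le_div_iff₀ hMy hMy]
          have : f * (s.card : ℝ) ≤ (k : ℝ) * f := by nlinarith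
          nlinarith
        linarith
      have hmain2 : f / (M y : ℝ) * (s.card : ℝ) ≤ f := by
        rw [div_mul_eq_mul_div, div_le_iff₀ hMy]
        nlinarith
      have hminF : min t F = F := min_eq_right hFt
      rw [hminF]
      rcases le_total t (binomCDFpred n θ (y + 1)) with h | h
      · rw [min_eq_left h]; linarith
      · rw [min_eq_right h, hstep]; linarith
  calc ∑ y ∈ Finset.range (n + 1), ∑ k ∈ Finset.Icc 1 (M y),
      binomP n θ y / (M y : ℝ) *
        (if (k : ℝ) / (M y : ℝ) * binomP n θ y + binomCDFpred n θ y ≤ t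
          then (1 : ℝ) else 0)
      ≤ ∑ y ∈ Finset.range (n + 1),
          (min t (binomCDFpred n θ (y + 1)) - min t (binomCDFpred n θ y)) :=
        Finset.sum_le_sum key
    _ = min t (binomCDFpred n θ (n + 1)) - min t (binomCDFpred n θ 0) :=
        Finset.sum_range_sub (fun y => min t (binomCDFpred n θ y)) (n + 1)
    _ ≤ t := by
        have h0 : binomCDFpred n θ 0 = 0 := by simp [binomCDFpred]
        rw [h0, min_eq_right ht0]
        simp [min_le_left]
end

section
/- Let θ ∈ (0,1), α ∈ (0,1), and let Y₁, Y₂, … be independent and identically Binomial(n,θ) distributed random variables on a probability space. Let v₁, v₂, … be a deterministic sequence in [0,1] that is uniformly distributed modulo 1, i.e., for every a ∈ [0,1], (1/m) Σ_{k=1}^{m} 𝟙[v_k ≤ a] → a as m → ∞. Then, almost surely, (1/m) Σ_{k=1}^{m} 𝟙[v_k·f_θ(Y_k) + F_θ(Y_k − 1) ≤ α/2] → α/2 as m → ∞. (The long-run proportion of randomized upper confidence limits computed with the auxiliary deterministic sequence that fail to cover θ converges to α/2.) -/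
open MeasureTheory ProbabilityTheory Filter

open Finset Topology


lemma wlln_aux {Ω : Type*} [MeasurableSpace Ω] (P : Measure Ω) [IsProbabilityMeasure P]
    (A : ℕ → Set Ω) (hA : ∀ k, MeasurableSet (A k))
    (hind : Pairwise fun i j => IndepFun ((A i).indicator (fun _ => (1:ℝ)))
      ((A j).indicator (fun _ => (1:ℝ))) P)
    (p : ℝ) (hp0 : 0 ≤ p) (hp : ∀ k, P (A k) = ENNReal.ofReal p)
    (c : ℕ → ℝ) (hc0 : ∀ k, 0 ≤ c k) (hc1 : ∀ k, c k ≤ 1)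
    (a : ℝ)
    (hca : Tendsto (fun m : ℕ => (1 / m : ℝ) * ∑ k ∈ range m, c k) atTop (𝓝 a)) :
    ∀ᵐ ω ∂P, Tendsto (fun m : ℕ => (1 / m : ℝ) * ∑ k ∈ range m,
      c k * (A k).indicator (fun _ => (1:ℝ)) ω) atTop (𝓝 (p * a)) := by
  set X : ℕ → Ω → ℝ := fun k ω => c k * (A k).indicator (fun _ => (1:ℝ)) ω with hX
  have hXval : ∀ k ω, 0 ≤ X k ω ∧ X k ω ≤ 1 := by
    intro k ω
    by_cases h : ω ∈ A k <;>
      simp [hX, Set.indicator_apply, h, hc0 k, hc1 k]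
  have hX2 : ∀ k, MemLp (X k) 2 P := fun k =>
    (memLp_indicator_const 2 (hA k) (1:ℝ) (Or.inr (measure_ne_top _ _))).const_mul (c k)
  have hXint : ∀ k, Integrable (X k) P := fun k => (hX2 k).integrable one_le_two
  have hXmean : ∀ k, ∫ ω, X k ω ∂P = c k * p := by
    intro k
    rw [show (fun ω => X k ω) = fun ω => c k * (A k).indicator (fun _ => (1:ℝ)) ω from rfl,
      MeasureTheory.integral_const_mul, integral_indicator_const (1:ℝ) (hA k), measureReal_def, hp k,
      ENNReal.toReal_ofReal hp0, smul_eq_mul, mul_one]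
  set S : ℕ → Ω → ℝ := fun m => ∑ k ∈ range m, X k with hS
  set C : ℕ → ℝ := fun m => ∑ k ∈ range m, c k with hC
  have hSapp : ∀ m ω, S m ω = ∑ k ∈ range m, X k ω := by
    intro m ω; simp [hS, Finset.sum_apply]
  have hSmean : ∀ m, ∫ ω, S m ω ∂P = p * C m := by
    intro m
    have h1 : ∫ ω, S m ω ∂P = ∑ k ∈ range m, ∫ ω, X k ω ∂P := by
      simp_rw [hSapp]
      exact integral_finset_sum _ fun k _ => hXint k
    rw [h1]
    simp_rw [hXmean]
    rw [hC, ← Finset.sum_mul, mul_comm]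
  have hXvar : ∀ k, variance (X k) P ≤ 1 := by
    intro k
    refine le_trans (variance_le_expectation_sq (hX2 k).1) ?_
    have h1 : ∀ ω, (X k ^ 2) ω ≤ (fun _ => (1:ℝ)) ω := by
      intro ω
      have h2 := hXval k ω
      exact pow_le_one₀ h2.1 h2.2
    calc ∫ ω, (X k ^ 2) ω ∂P ≤ ∫ _ω, (1:ℝ) ∂P :=
          integral_mono (hX2 k).integrable_sq (integrable_const 1) h1
      _ = 1 := by simp
  have hSvar : ∀ m : ℕ, variance (S m) P ≤ m := by
    intro m
    have h1 : variance (S m) P = ∑ k ∈ range m, variance (X k) P :=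
      IndepFun.variance_sum (fun k _ => hX2 k) (fun i _ j _ hij =>
        (hind hij).comp (measurable_const_mul (c i)) (measurable_const_mul (c j)))
    rw [h1]
    calc ∑ k ∈ range m, variance (X k) P ≤ ∑ _k ∈ range m, (1:ℝ) :=
          Finset.sum_le_sum fun k _ => hXvar k
      _ = m := by simp
  -- Chebyshev + Borel-Cantelli along squares
  have key : ∀ j : ℕ, ∀ᵐ ω ∂P, ∀ᶠ m : ℕ in atTop,
      |S ((m+1)^2) ω - p * C ((m+1)^2)| < (1/((j:ℝ)+1)) * (((m+1)^2 : ℕ) : ℝ) := by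
    intro j
    set ε : ℝ := 1/((j:ℝ)+1) with hε
    have hεpos : 0 < ε := by positivity
    set G : ℕ → Set Ω := fun m =>
      {ω | ε * (((m+1)^2 : ℕ) : ℝ) ≤ |S ((m+1)^2) ω - ∫ ω', S ((m+1)^2) ω' ∂P|} with hG
    have hbound : ∀ m : ℕ, P (G m) ≤
        ENNReal.ofReal ((1/ε^2) * (1/(((m+1:ℕ)):ℝ)^2)) := by
      intro m
      have hcpos : (0:ℝ) < ε * (((m+1)^2 : ℕ) : ℝ) := by positivity
      have hS2 : MemLp (S ((m+1)^2)) 2 P := memLp_finsetSum' _ (fun k _ => hX2 k)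
      refine le_trans (meas_ge_le_variance_div_sq hS2 hcpos) (ENNReal.ofReal_le_ofReal ?_)
      have hNR : ((((m+1)^2 : ℕ)):ℝ) = ((m+1:ℕ):ℝ)^2 := by push_cast; ring
      have h1 : ((m+1:ℕ):ℝ) ≠ 0 := by positivity
      calc variance (S ((m+1)^2)) P / (ε * (((m+1)^2:ℕ):ℝ))^2
          ≤ ((((m+1)^2:ℕ)):ℝ) / (ε * (((m+1)^2:ℕ):ℝ))^2 :=
            (div_le_div_iff_of_pos_right (by positivity)).2 (hSvar ((m+1)^2))
        _ = 1/ε^2 * (1/(((m+1:ℕ)):ℝ)^2) := by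
            rw [hNR]; field_simp
    have hsum : Summable (fun m : ℕ => (1/ε^2) * (1/(((m+1:ℕ)):ℝ)^2)) := by
      apply Summable.mul_left
      exact (summable_nat_add_iff (f := fun m : ℕ => 1/((m:ℝ))^2) 1).2
        (Real.summable_one_div_nat_pow.2 one_lt_two)
    have htsum : (∑' m, P (G m)) ≠ ⊤ := by
      apply ne_top_of_le_ne_top _ (ENNReal.tsum_le_tsum hbound)
      rw [← ENNReal.ofReal_tsum_of_nonneg (fun m => by positivity) hsum]
      exact ENNReal.ofReal_ne_top
    filter_upwards [ae_eventually_notMem htsum] with ω hω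
    filter_upwards [hω] with m hm
    rw [hG] at hm
    simp only [Set.mem_setOf_eq, not_le] at hm
    rwa [hSmean] at hm
  filter_upwards [ae_all_iff.2 key] with ω hω
  -- deterministic part
  have hNtop : Tendsto (fun m : ℕ => (m+1)^2) atTop atTop := by
    apply tendsto_atTop_mono (fun m => ?_) tendsto_id
    calc m ≤ m + 1 := Nat.le_succ m
      _ ≤ (m+1)^2 := Nat.le_self_pow two_ne_zero _
  have hCconv : Tendsto (fun m : ℕ => (1/((((m+1)^2 : ℕ)):ℝ)) * C ((m+1)^2)) atTop (𝓝 a) :=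
    hca.comp hNtop
  have hdiff : Tendsto (fun m : ℕ =>
      (S ((m+1)^2) ω - p * C ((m+1)^2)) / ((((m+1)^2 : ℕ)):ℝ)) atTop (𝓝 0) := by
    rw [Metric.tendsto_atTop]
    intro δ hδ
    obtain ⟨j, hj⟩ := exists_nat_one_div_lt hδ
    obtain ⟨N, hN⟩ := eventually_atTop.1 (hω j)
    refine ⟨N, fun m hm => ?_⟩
    have hNR : (0:ℝ) < ((((m+1)^2 : ℕ)):ℝ) := by positivity
    rw [Real.dist_eq, sub_zero, abs_div, abs_of_pos hNR, div_lt_iff₀ hNR]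
    calc |S ((m+1)^2) ω - p * C ((m+1)^2)| < (1/((j:ℝ)+1)) * (((m+1)^2 : ℕ):ℝ) := hN m hm
      _ < δ * (((m+1)^2 : ℕ):ℝ) := by
          apply mul_lt_mul_of_pos_right _ hNR
          exact_mod_cast hj
  have hsq : Tendsto (fun m : ℕ => S ((m+1)^2) ω / ((((m+1)^2 : ℕ)):ℝ)) atTop (𝓝 (p * a)) := by
    have h3 := hdiff.add (hCconv.const_mul p)
    rw [zero_add] at h3
    refine h3.congr fun m => ?_
    have hNR : ((((m+1)^2 : ℕ)):ℝ) ≠ 0 := by positivity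
    field_simp
    try ring
  have hmono : Monotone (fun m => S m ω) := by
    apply monotone_nat_of_le_succ
    intro m
    show S m ω ≤ S (m+1) ω
    rw [hSapp, hSapp, Finset.sum_range_succ]
    have := (hXval m ω).1
    linarith
  have hfinal := tendsto_div_of_monotone_of_exists_subseq_tendsto_div (fun m => S m ω)
    (p * a) hmono ?_
  · refine hfinal.congr fun m => ?_
    show S m ω / m = (1/m:ℝ) * ∑ k ∈ range m, c k * (A k).indicator (fun _ => (1:ℝ)) ω
    rw [hSapp]
    exact (one_div_mul_eq_div _ _).symm
  · intro b hb
    refine ⟨fun m => (m+1)^2, ?_, hNtop, hsq⟩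
    have h1 : Tendsto (fun n : ℕ => ((1:ℝ) + 1/((n:ℝ)+1))^2) atTop (𝓝 1) := by
      have h2 := (tendsto_const_nhds (x := (1:ℝ)) (f := atTop)).add
        tendsto_one_div_add_atTop_nhds_zero_nat
      rw [add_zero] at h2
      simpa using h2.pow 2
    have h2 : ∀ᶠ n : ℕ in atTop, ((1:ℝ) + 1/((n:ℝ)+1))^2 < b :=
      Filter.Tendsto.eventually_lt_const hb h1
    filter_upwards [h2] with m hm
    have hcast : ((((m+1)+1)^2 : ℕ) : ℝ)
        = (((1:ℝ) + 1/((m:ℝ)+1))^2) * ((((m+1)^2 : ℕ)):ℝ) := by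
      have h1' : ((m:ℝ)+1) ≠ 0 := by positivity
      push_cast
      field_simp
      try ring
    rw [hcast]
    exact mul_le_mul_of_nonneg_right hm.le (by positivity)

/-- If `Y₁, Y₂, …` are iid Binomial(n,θ) and `v₁, v₂, …` is a deterministic sequence in
`[0,1]` that is uniformly distributed modulo 1, then almost surely the long-run proportion
of indices `k` with `v_k f_θ(Y_k) + F_θ(Y_k - 1) ≤ α/2` (i.e. of randomized upper limits,
computed with the auxiliary deterministic sequence, failing to cover `θ`) converges to
`α/2`. -/
theorem stmt_17 (n : ℕ) (hn : 1 ≤ n) (θ α : ℝ) (hθ : θ ∈ Set.Ioo (0 : ℝ) 1)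
    (hα : α ∈ Set.Ioo (0 : ℝ) 1)
    {Ω : Type*} [MeasurableSpace Ω] (P : Measure Ω) [IsProbabilityMeasure P]
    (Y : ℕ → Ω → ℕ)
    (hmeas : ∀ k, Measurable (Y k))
    (hindep : iIndepFun Y P)
    (hdist : ∀ k, ∀ y : ℕ, P {ω | Y k ω = y} = ENNReal.ofReal (binomP n θ y))
    (v : ℕ → ℝ) (hv : ∀ k, v k ∈ Set.Icc (0 : ℝ) 1)
    (hud : ∀ a ∈ Set.Icc (0 : ℝ) 1,
      Tendsto
        (fun m : ℕ => (1 / m : ℝ) * ∑ k ∈ Finset.range m,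
          (if v k ≤ a then (1 : ℝ) else 0))
        atTop (nhds a)) :
    ∀ᵐ ω ∂P,
      Tendsto
        (fun m : ℕ => (1 / m : ℝ) * ∑ k ∈ Finset.range m,
          (if v k * binomP n θ (Y k ω) + binomCDFpred n θ (Y k ω) ≤ α / 2
            then (1 : ℝ) else 0))
        atTop (nhds (α / 2)) := by
  obtain ⟨hθ0, hθ1⟩ := hθ
  obtain ⟨hα0, hα1⟩ := hα
  have hfnn : ∀ y, 0 ≤ binomP n θ y := fun y =>
    mul_nonneg (mul_nonneg (by positivity) (pow_nonneg hθ0.le _))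
      (pow_nonneg (by linarith) _)
  have hFmono : ∀ {i j : ℕ}, i ≤ j → binomCDFpred n θ i ≤ binomCDFpred n θ j := by
    intro i j hij
    apply Finset.sum_le_sum_of_subset_of_nonneg (Finset.range_subset_range.2 hij)
    exact fun k _ _ => hfnn k
  have hsum1 : binomCDFpred n θ (n+1) = 1 := by
    have h1 := add_pow θ (1-θ) n
    have h2 : θ + (1-θ) = 1 := by ring
    rw [h2, one_pow] at h1
    calc binomCDFpred n θ (n+1)
        = ∑ k ∈ Finset.range (n+1), θ^k * (1-θ)^(n-k) * (n.choose k : ℝ) := by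
          apply Finset.sum_congr rfl
          intro k _
          rw [binomP]; ring
      _ = 1 := h1.symm
  have hexists : ∃ y, α/2 < binomCDFpred n θ (y+1) := ⟨n, by rw [hsum1]; linarith⟩
  set t := Nat.find hexists with ht
  have ht1 : α/2 < binomCDFpred n θ (t+1) := Nat.find_spec hexists
  have htn : t ≤ n := Nat.find_min' hexists (by rw [hsum1]; linarith)
  have ht2 : binomCDFpred n θ t ≤ α/2 := by
    rcases Nat.eq_zero_or_pos t with h | h
    · rw [h]
      simp only [binomCDFpred, Finset.range_zero, Finset.sum_empty]
      linarith
    · have h1 := Nat.find_min hexists (show t - 1 < t by omega)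
      rw [not_lt] at h1
      have h2 : t - 1 + 1 = t := by omega
      rwa [h2] at h1
  have hft : 0 < binomP n θ t := by
    rw [binomP]
    have h1 : (0:ℝ) < n.choose t := by exact_mod_cast Nat.choose_pos htn
    apply mul_pos (mul_pos h1 (pow_pos hθ0 _)) (pow_pos (by linarith) _)
  set aa := (α/2 - binomCDFpred n θ t)/(binomP n θ t) with haa
  have haa0 : 0 ≤ aa := div_nonneg (by linarith) hft.le
  have hFsucc : binomCDFpred n θ (t+1) = binomCDFpred n θ t + binomP n θ t := by
    rw [binomCDFpred, binomCDFpred, Finset.sum_range_succ]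
  have haa1 : aa ≤ 1 := by
    rw [haa, div_le_one₀ hft]
    linarith
  have hkey : ∀ (y : ℕ) (cv : ℝ), 0 ≤ cv → cv ≤ 1 →
      ((if cv * binomP n θ y + binomCDFpred n θ y ≤ α/2 then (1:ℝ) else 0)
        = (if y < t then (1:ℝ) else 0)
          + (if cv ≤ aa then (1:ℝ) else 0) * (if y = t then (1:ℝ) else 0)) := by
    intro y cv hcv0 hcv1
    rcases lt_trichotomy y t with hy | hy | hy
    · have h1 : binomCDFpred n θ (y+1) ≤ α/2 := by
        have h2 := Nat.find_min hexists hy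
        rwa [not_lt] at h2
      have h4 : binomCDFpred n θ (y+1) = binomCDFpred n θ y + binomP n θ y := by
        rw [binomCDFpred, binomCDFpred, Finset.sum_range_succ]
      have h3 : cv * binomP n θ y ≤ binomP n θ y := mul_le_of_le_one_left (hfnn y) hcv1
      rw [if_pos (by linarith), if_pos hy, if_neg (by omega : ¬ y = t)]
      ring
    · rw [hy]
      have h4 : (cv * binomP n θ t + binomCDFpred n θ t ≤ α/2) ↔ cv ≤ aa := by
        rw [haa, le_div_iff₀ hft]
        constructor <;> intro h <;> linarith
      by_cases h : cv ≤ aa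
      · rw [if_pos (h4.2 h), if_pos h, if_neg (lt_irrefl t), if_pos rfl]; ring
      · rw [if_neg (fun hh => h (h4.1 hh)), if_neg h, if_neg (lt_irrefl t), if_pos rfl]; ring
    · have h1 : α/2 < binomCDFpred n θ y :=
        lt_of_lt_of_le ht1 (hFmono hy)
      have h2 : ¬ (cv * binomP n θ y + binomCDFpred n θ y ≤ α/2) := by
        have h3 := mul_nonneg hcv0 (hfnn y)
        push_neg
        linarith
      rw [if_neg h2, if_neg (by omega : ¬ y < t), if_neg (by omega : ¬ y = t)]
      ring
  have hpair : ∀ s : Set ℕ, Pairwise fun i j =>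
      IndepFun ((Y i ⁻¹' s).indicator (fun _ => (1:ℝ)))
        ((Y j ⁻¹' s).indicator (fun _ => (1:ℝ))) P := by
    intro s i j hij
    have h1 : IndepFun (Y i) (Y j) P := hindep.indepFun hij
    have h2 : IndepFun (s.indicator (fun _ => (1:ℝ)) ∘ Y i) (s.indicator (fun _ => (1:ℝ)) ∘ Y j) P :=
      h1.comp measurable_from_nat measurable_from_nat
    have h3 : ∀ k : ℕ, (s.indicator (fun _ => (1:ℝ))) ∘ (Y k)
        = (Y k ⁻¹' s).indicator (fun _ => (1:ℝ)) := by
      intro k; funext ω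
      by_cases h : Y k ω ∈ s <;> simp [Set.indicator_apply, h, Function.comp]
    rwa [h3 i, h3 j] at h2
  have hmeasA : ∀ k, P (Y k ⁻¹' Set.Iio t) = ENNReal.ofReal (binomCDFpred n θ t) := by
    intro k
    have h1 : Y k ⁻¹' Set.Iio t = ⋃ j ∈ Finset.range t, {ω | Y k ω = j} := by
      ext ω
      simp only [Set.mem_preimage, Set.mem_Iio, Set.mem_iUnion, Finset.mem_range,
        Set.mem_setOf_eq, exists_prop]
      constructor
      · intro h; exact ⟨Y k ω, h, rfl⟩
      · rintro ⟨j, hj, rfl⟩; exact hj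
    rw [h1, measure_biUnion_finset ?_ ?_]
    · simp_rw [hdist k]
      rw [← ENNReal.ofReal_sum_of_nonneg (fun j _ => hfnn j)]
      rfl
    · intro i _ j _ hij
      simp only [Function.onFun]
      apply Set.disjoint_left.2
      rintro ω h1' h2'
      simp only [Set.mem_setOf_eq] at h1' h2'
      exact hij (h1' ▸ h2')
    · intro j _
      exact hmeas k (measurableSet_singleton j)
  have hFnn : 0 ≤ binomCDFpred n θ t := Finset.sum_nonneg fun j _ => hfnn j
  have hcaA : Tendsto (fun m : ℕ => (1/m:ℝ) * ∑ k ∈ Finset.range m, (1:ℝ))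
      atTop (𝓝 1) := by
    apply tendsto_const_nhds.congr'
    filter_upwards [eventually_ge_atTop 1] with m hm
    have hm0 : (m:ℝ) ≠ 0 := Nat.cast_ne_zero.2 (by omega)
    rw [Finset.sum_const, Finset.card_range, nsmul_eq_mul, mul_one, one_div,
      inv_mul_cancel₀ hm0]
  have hA := wlln_aux P (fun k => Y k ⁻¹' Set.Iio t)
    (fun k => hmeas k measurableSet_Iio) (hpair _)
    (binomCDFpred n θ t) hFnn hmeasA
    (fun _ => 1) (fun _ => zero_le_one) (fun _ => le_refl 1) 1 hcaA
  have hB := wlln_aux P (fun k => Y k ⁻¹' {t})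
    (fun k => hmeas k (measurableSet_singleton t)) (hpair _)
    (binomP n θ t) (hfnn t) (fun k => hdist k t)
    (fun k => if v k ≤ aa then 1 else 0)
    (fun k => by by_cases h : v k ≤ aa <;> simp [h])
    (fun k => by by_cases h : v k ≤ aa <;> simp [h])
    aa (hud aa ⟨haa0, haa1⟩)
  filter_upwards [hA, hB] with ω h1 h2
  have h3 := h1.add h2
  have h4 : binomCDFpred n θ t * 1 + binomP n θ t * aa = α/2 := by
    rw [mul_one, haa, mul_comm, div_mul_cancel₀ _ hft.ne']
    ring
  rw [h4] at h3
  refine h3.congr fun m => ?_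
  rw [← mul_add, ← Finset.sum_add_distrib]
  congr 1
  apply Finset.sum_congr rfl
  intro k _
  rw [hkey (Y k ω) (v k) (hv k).1 (hv k).2]
  by_cases h : Y k ω < t <;> by_cases h' : Y k ω = t <;>
    simp [Set.indicator_apply, Set.mem_preimage, Set.mem_Iio, h, h']
end

section
/- Let θ ∈ (0,1), α ∈ (0,1), let N ≥ 1 be an integer, and let Y₁, Y₂, … be independent and identically Binomial(n,θ) distributed random variables on a probability space. Let w₁, w₂, … be a deterministic sequence in (0,1] that is periodic with period N and such that (w₁, …, w_N) is a permutation of (1/N, 2/N, …, N/N). Then, almost surely, (1/m) Σ_{k=1}^{m} 𝟙[w_k·f_θ(Y_k) + F_θ(Y_k − 1) ≤ α/2] converges as m → ∞ to the limit L = (1/N) Σ_{j=1}^{N} Σ_{y=0}^{n} f_θ(y)·𝟙[(j/N)·f_θ(y) + F_θ(y−1) ≤ α/2], and this limit satisfies L ≤ α/2. -/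
open MeasureTheory ProbabilityTheory Filter

lemma binomP_nonneg {n : ℕ} {θ : ℝ} (h0 : 0 ≤ θ) (h1 : θ ≤ 1) (y : ℕ) :
    0 ≤ binomP n θ y := by
  unfold binomP
  have : (0:ℝ) ≤ 1 - θ := by linarith
  positivity

lemma binomP_eq_zero {n : ℕ} {θ : ℝ} {y : ℕ} (h : n < y) : binomP n θ y = 0 := by
  unfold binomP
  rw [Nat.choose_eq_zero_of_lt h]
  simp

noncomputable def gAux (n : ℕ) (θ α c : ℝ) (y : ℕ) : ℝ :=
  if c * binomP n θ y + binomCDFpred n θ y ≤ α / 2 then (1 : ℝ) else 0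

noncomputable def pAux (n : ℕ) (θ α c : ℝ) : ℝ :=
  ∑ y ∈ Finset.range (n + 1), binomP n θ y * gAux n θ α c y

lemma gAux_nonneg (n : ℕ) (θ α c : ℝ) (y : ℕ) : 0 ≤ gAux n θ α c y := by
  unfold gAux; split <;> norm_num

lemma gAux_le_one (n : ℕ) (θ α c : ℝ) (y : ℕ) : gAux n θ α c y ≤ 1 := by
  unfold gAux; split <;> norm_num

lemma exp_gAux {Ω : Type*} [MeasurableSpace Ω] (P : Measure Ω) [IsProbabilityMeasure P]
    (n : ℕ) (θ α c : ℝ) (hθ0 : 0 ≤ θ) (hθ1 : θ ≤ 1) (Z : Ω → ℕ) (hZ : Measurable Z)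
    (hd : ∀ y, P {ω | Z ω = y} = ENNReal.ofReal (binomP n θ y)) :
    ∫ ω, gAux n θ α c (Z ω) ∂P = pAux n θ α c := by
  have hmap : ∀ y : ℕ, (Measure.map Z P) {y} = ENNReal.ofReal (binomP n θ y) := by
    intro y
    rw [Measure.map_apply hZ (measurableSet_singleton y)]
    exact hd y
  haveI : IsProbabilityMeasure (Measure.map Z P) := Measure.isProbabilityMeasure_map hZ.aemeasurable
  rw [← integral_map hZ.aemeasurable (measurable_from_nat).aestronglyMeasurable]
  have hint : Integrable (gAux n θ α c) (Measure.map Z P) := by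
    apply Integrable.mono' (integrable_const (1:ℝ))
    · exact (measurable_from_nat).aestronglyMeasurable
    · filter_upwards with y
      rw [Real.norm_eq_abs, abs_of_nonneg (gAux_nonneg n θ α c y)]
      exact gAux_le_one n θ α c y
  rw [integral_countable' hint]
  have hterm : ∀ y : ℕ, ((Measure.map Z P) {y}).toReal • gAux n θ α c y
      = binomP n θ y * gAux n θ α c y := by
    intro y
    rw [hmap y, ENNReal.toReal_ofReal (binomP_nonneg hθ0 hθ1 y), smul_eq_mul]
  simp only [measureReal_def]
  rw [tsum_congr hterm]
  exact tsum_eq_sum (fun y hy => by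
    rw [binomP_eq_zero (by simpa using Finset.mem_range.not.mp hy), zero_mul])

lemma part2_bound (n N : ℕ) (hN : 1 ≤ N) (θ α : ℝ) (hθ : θ ∈ Set.Ioo (0:ℝ) 1)
    (hα : α ∈ Set.Ioo (0:ℝ) 1) :
    (1 / N : ℝ) * ∑ j ∈ Finset.Icc 1 N, ∑ y ∈ Finset.range (n + 1),
        binomP n θ y *
          (if (j : ℝ) / N * binomP n θ y + binomCDFpred n θ y ≤ α / 2
            then (1 : ℝ) else 0) ≤ α / 2 := by
  have hNpos : (0:ℝ) < N := by exact_mod_cast hN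
  have hf := fun y => binomP_nonneg (n := n) hθ.1.le hθ.2.le y
  set t := α / 2 with ht
  have htpos : 0 < t := by rw [ht]; linarith [hα.1]
  set c : ℕ → Finset ℕ := fun y =>
    (Finset.Icc 1 N).filter (fun j => (j : ℝ) / N * binomP n θ y + binomCDFpred n θ y ≤ t)
    with hc
  have hsum : ∀ y, ∑ j ∈ Finset.Icc 1 N,
      binomP n θ y * (if (j : ℝ) / N * binomP n θ y + binomCDFpred n θ y ≤ t
        then (1 : ℝ) else 0) = binomP n θ y * ((c y).card : ℝ) := by
    intro y
    rw [← Finset.mul_sum]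
    congr 1
    simp only [Finset.sum_boole]
    rfl
  have hcard : ∀ y, ((c y).card : ℝ) ≤ N := by
    intro y
    have hsub : c y ⊆ Finset.Icc 1 N := Finset.filter_subset _ _
    have := Finset.card_le_card hsub
    rw [Nat.card_Icc] at this
    exact_mod_cast this.trans (by omega)
  rw [Finset.sum_comm]
  simp only [hsum]
  -- reduce to ∑ ≤ N * t
  rw [one_div, inv_mul_le_iff₀ hNpos]
  by_cases hall : ∀ y ∈ Finset.range (n + 1), (c y).card = 0
  · have : ∑ y ∈ Finset.range (n + 1), binomP n θ y * ((c y).card : ℝ) = 0 :=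
      Finset.sum_eq_zero fun y hy => by rw [hall y hy]; simp
    rw [this]; positivity
  · push_neg at hall
    set T : Finset ℕ := (Finset.range (n + 1)).filter (fun y => (c y).card ≠ 0) with hT
    have hTne : T.Nonempty := by
      obtain ⟨y, hy, hy0⟩ := hall
      exact ⟨y, Finset.mem_filter.mpr ⟨hy, hy0⟩⟩
    set ys := T.max' hTne with hys
    have hysT := T.max'_mem hTne
    have hysn : ys ∈ Finset.range (n + 1) := (Finset.mem_filter.mp hysT).1
    have hcys : (c ys).card ≠ 0 := (Finset.mem_filter.mp hysT).2
    have hSne : (c ys).Nonempty := Finset.card_pos.mp (Nat.pos_of_ne_zero hcys)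
    set j0 := (c ys).max' hSne with hj0
    have hj0mem := (c ys).max'_mem hSne
    have hj0f := Finset.mem_filter.mp hj0mem
    have hcond : (j0 : ℝ) / N * binomP n θ ys + binomCDFpred n θ ys ≤ t := hj0f.2
    have hcle : (c ys).card ≤ j0 := by
      have hsub : c ys ⊆ Finset.Icc 1 j0 := by
        intro x hx
        have hx1 : 1 ≤ x := (Finset.mem_Icc.mp (Finset.mem_filter.mp hx).1).1
        have hx2 : x ≤ j0 := (c ys).le_max' x hx
        exact Finset.mem_Icc.mpr ⟨hx1, hx2⟩
      have := Finset.card_le_card hsub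
      rwa [Nat.card_Icc, Nat.add_sub_cancel] at this
    have hzero : ∀ y ∈ Finset.range (n + 1), y ∉ Finset.range (ys + 1) →
        binomP n θ y * ((c y).card : ℝ) = 0 := by
      intro y hy hy2
      have hygt : ys < y := by
        simp only [Finset.mem_range] at hy2 ⊢
        omega
      have : (c y).card = 0 := by
        by_contra hne
        have : y ∈ T := Finset.mem_filter.mpr ⟨hy, hne⟩
        exact absurd (T.le_max' y this) (by omega)
      rw [this]; simp
    have hsubset : Finset.range (ys + 1) ⊆ Finset.range (n + 1) := by
      apply Finset.range_subset_range.mpr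
      simp only [Finset.mem_range] at hysn
      omega
    refine le_trans (le_of_eq (Finset.sum_subset hsubset hzero).symm) ?_
    rw [Finset.sum_range_succ]
    have hcsum : ∑ y ∈ Finset.range ys, binomP n θ y * ((c y).card : ℝ)
        ≤ (N : ℝ) * binomCDFpred n θ ys := by
      rw [binomCDFpred, Finset.mul_sum]
      apply Finset.sum_le_sum
      intro y _
      rw [mul_comm (N : ℝ)]
      exact mul_le_mul_of_nonneg_left (hcard y) (hf y)
    have h2 : binomP n θ ys * ((c ys).card : ℝ) ≤ binomP n θ ys * (j0 : ℝ) :=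
      mul_le_mul_of_nonneg_left (by exact_mod_cast hcle) (hf ys)
    have h3 : (j0 : ℝ) * binomP n θ ys + (N : ℝ) * binomCDFpred n θ ys ≤ (N : ℝ) * t := by
      have hmul := mul_le_mul_of_nonneg_left hcond hNpos.le
      rw [mul_add] at hmul
      have he : (N : ℝ) * ((j0 : ℝ) / N * binomP n θ ys) = (j0 : ℝ) * binomP n θ ys := by
        field_simp
      linarith
    nlinarith [hf ys]

lemma sum_range_mul_split (h : ℕ → ℝ) (N q : ℕ) :
    ∑ k ∈ Finset.range (q * N), h k
      = ∑ j ∈ Finset.range q, ∑ r ∈ Finset.range N, h (j * N + r) := by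
  induction q with
  | zero => simp
  | succ q ih => rw [Nat.succ_mul, Finset.sum_range_add, ih, Finset.sum_range_succ]

lemma cesaro_periodic (N : ℕ) (hN : 1 ≤ N) (h : ℕ → ℝ) (h0 : ∀ k, 0 ≤ h k)
    (h1 : ∀ k, h k ≤ 1) (p : ℕ → ℝ)
    (hp : ∀ r, r < N → Tendsto
      (fun q : ℕ => ((q : ℝ))⁻¹ * ∑ j ∈ Finset.range q, h (j * N + r)) atTop (nhds (p r))) :
    Tendsto (fun m : ℕ => (1 / (m : ℝ)) * ∑ k ∈ Finset.range m, h k) atTop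
      (nhds ((1 / (N : ℝ)) * ∑ r ∈ Finset.range N, p r)) := by
  have hNpos : (0 : ℝ) < N := by exact_mod_cast hN
  set S : ℕ → ℝ := fun m => ∑ k ∈ Finset.range m, h k with hS
  set L : ℝ := (1 / (N : ℝ)) * ∑ r ∈ Finset.range N, p r with hL
  -- B q tendsto L
  have hB : Tendsto (fun q : ℕ => (1 / (N : ℝ)) *
      ∑ r ∈ Finset.range N, ((q : ℝ)⁻¹ * ∑ j ∈ Finset.range q, h (j * N + r)))
      atTop (nhds L) := by
    exact (tendsto_finset_sum _ fun r hr => hp r (Finset.mem_range.mp hr)).const_mul _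
  have hBq : ∀ q : ℕ, (1 / (N : ℝ)) *
      ∑ r ∈ Finset.range N, ((q : ℝ)⁻¹ * ∑ j ∈ Finset.range q, h (j * N + r))
      = S (q * N) / ((q : ℝ) * N) := by
    intro q
    have e1 : S (q * N) = ∑ r ∈ Finset.range N, ∑ j ∈ Finset.range q, h (j * N + r) := by
      rw [hS]; simp only; rw [sum_range_mul_split, Finset.sum_comm]
    rw [← Finset.mul_sum, e1]
    simp only [div_eq_mul_inv, mul_inv]
    ring
  have hdiv : Tendsto (fun m : ℕ => m / N) atTop atTop := by
    apply tendsto_atTop_atTop.mpr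
    intro b
    exact ⟨b * N, fun a ha => (Nat.le_div_iff_mul_le (by omega)).mpr ha⟩
  have hC : Tendsto (fun m : ℕ => S ((m / N) * N) / (((m / N : ℕ) : ℝ) * N)) atTop (nhds L) :=
    (hB.comp hdiv).congr (fun m => hBq (m / N))
  -- R tendsto 1
  have hmodN : ∀ m : ℕ, m % N ≤ N := fun m => (Nat.mod_lt m (by omega)).le
  have hdivbound : ∀ m a : ℕ, a ≤ N → ((a : ℕ) : ℝ) / m ≤ (N : ℝ) / m := by
    intro m a ha
    rcases Nat.eq_zero_or_pos m with hm | hm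
    · simp [hm]
    · have hm' : (0 : ℝ) < m := by exact_mod_cast hm
      exact (div_le_div_iff_of_pos_right hm').mpr (by exact_mod_cast ha)
  have hR : Tendsto (fun m : ℕ => (((m / N) * N : ℕ) : ℝ) / m) atTop (nhds 1) := by
    have hmt : Tendsto (fun m : ℕ => 1 - ((m % N : ℕ) : ℝ) / m) atTop (nhds (1 - 0)) :=
      tendsto_const_nhds.sub (squeeze_zero (fun m => by positivity)
        (fun m => hdivbound m _ (hmodN m)) (tendsto_const_div_atTop_nhds_zero_nat (N : ℝ)))
    rw [sub_zero] at hmt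
    apply hmt.congr'
    filter_upwards [eventually_ge_atTop 1] with m hm
    have hm' : (0 : ℝ) < m := by exact_mod_cast hm
    have h2 : m / N * N + m % N = m := Nat.div_add_mod' m N
    have h3 : (((m / N) * N : ℕ) : ℝ) + ((m % N : ℕ) : ℝ) = (m : ℝ) := by exact_mod_cast h2
    push_cast at h3 ⊢
    field_simp
    linarith
  -- E tendsto 0
  have key : ∀ m : ℕ, S m - S ((m / N) * N) = ∑ i ∈ Finset.range (m % N), h ((m / N) * N + i) := by
    intro m
    have h3 : m / N * N + m % N = m := Nat.div_add_mod' m N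
    have h4 : S m = S ((m / N) * N) + ∑ i ∈ Finset.range (m % N), h ((m / N) * N + i) := by
      calc S m = ∑ k ∈ Finset.range ((m / N) * N + m % N), h k := by rw [h3]
        _ = _ := Finset.sum_range_add h _ _
    linarith
  have hE : Tendsto (fun m : ℕ => (S m - S ((m / N) * N)) / m) atTop (nhds 0) := by
    apply squeeze_zero (f := fun m => (S m - S ((m / N) * N)) / m) (g := fun m => (N : ℝ) / m)
    · intro m
      apply div_nonneg _ (by positivity)
      rw [key m]
      exact Finset.sum_nonneg fun i _ => h0 _
    · intro m
      rcases Nat.eq_zero_or_pos m with hm | hm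
      · simp [hm]
      · have hm' : (0 : ℝ) < m := by exact_mod_cast hm
        apply (div_le_div_iff_of_pos_right hm').mpr
        rw [key m]
        calc ∑ i ∈ Finset.range (m % N), h ((m / N) * N + i)
            ≤ ∑ _i ∈ Finset.range (m % N), (1 : ℝ) :=
              Finset.sum_le_sum fun i _ => h1 _
          _ = ((m % N : ℕ) : ℝ) := by simp
          _ ≤ (N : ℝ) := by exact_mod_cast hmodN m
    · exact tendsto_const_div_atTop_nhds_zero_nat (N : ℝ)
  -- assemble
  have hfin : Tendsto (fun m : ℕ =>
      (S ((m / N) * N) / (((m / N : ℕ) : ℝ) * N)) * ((((m / N) * N : ℕ) : ℝ) / m)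
        + (S m - S ((m / N) * N)) / m) atTop (nhds (L * 1 + 0)) :=
    (hC.mul hR).add hE
  rw [mul_one, add_zero] at hfin
  apply hfin.congr'
  filter_upwards [eventually_ge_atTop N] with m hm
  have hq1 : 1 ≤ m / N := (Nat.le_div_iff_mul_le (by omega)).mpr (by omega)
  have hq' : (0 : ℝ) < ((m / N : ℕ) : ℝ) := by exact_mod_cast hq1
  have hm' : (0 : ℝ) < m := by
    have : 1 ≤ m := le_trans hN hm
    exact_mod_cast this
  have hcast : ((((m / N) * N : ℕ)) : ℝ) = ((m / N : ℕ) : ℝ) * N := by push_cast; ring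
  rw [hcast]
  field_simp
  try ring

lemma sum_shift_Icc (f : ℕ → ℝ) (N : ℕ) :
    ∑ r ∈ Finset.range N, f (r + 1) = ∑ j ∈ Finset.Icc 1 N, f j := by
  induction N with
  | zero => simp
  | succ N ih =>
    rw [Finset.sum_range_succ, ih, Finset.sum_Icc_succ_top (by omega : 1 ≤ N + 1)]


/-- If `Y₁, Y₂, …` are iid Binomial(n,θ) and `w₁, w₂, …` is a deterministic sequence in
`(0,1]`, periodic with period `N`, one period being a permutation of `1/N, 2/N, …, N/N`,
then almost surely the long-run proportion of indices `k` with
`w_k f_θ(Y_k) + F_θ(Y_k - 1) ≤ α/2` converges to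
`L = (1/N) ∑_{j=1}^{N} ∑_{y=0}^{n} f_θ(y) 𝟙[(j/N) f_θ(y) + F_θ(y-1) ≤ α/2]`,
and `L ≤ α/2`. -/
theorem stmt_18 (n : ℕ) (hn : 1 ≤ n) (θ α : ℝ) (hθ : θ ∈ Set.Ioo (0 : ℝ) 1)
    (hα : α ∈ Set.Ioo (0 : ℝ) 1) (N : ℕ) (hN : 1 ≤ N)
    {Ω : Type*} [MeasurableSpace Ω] (P : Measure Ω) [IsProbabilityMeasure P]
    (Y : ℕ → Ω → ℕ)
    (hmeas : ∀ k, Measurable (Y k))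
    (hindep : iIndepFun Y P)
    (hdist : ∀ k, ∀ y : ℕ, P {ω | Y k ω = y} = ENNReal.ofReal (binomP n θ y))
    (w : ℕ → ℝ) (hw : ∀ k, w k ∈ Set.Ioc (0 : ℝ) 1)
    (hper : ∀ k, w (k + N) = w k)
    (hperm : ∃ σ : Equiv.Perm (Fin N), ∀ j : Fin N, w (j : ℕ) = (((σ j : ℕ) + 1 : ℝ)) / N) :
    (∀ᵐ ω ∂P,
      Tendsto
        (fun m : ℕ => (1 / m : ℝ) * ∑ k ∈ Finset.range m,
          (if w k * binomP n θ (Y k ω) + binomCDFpred n θ (Y k ω) ≤ α / 2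
            then (1 : ℝ) else 0))
        atTop
        (nhds ((1 / N : ℝ) * ∑ j ∈ Finset.Icc 1 N, ∑ y ∈ Finset.range (n + 1),
          binomP n θ y *
            (if (j : ℝ) / N * binomP n θ y + binomCDFpred n θ y ≤ α / 2
              then (1 : ℝ) else 0)))) ∧
    (1 / N : ℝ) * ∑ j ∈ Finset.Icc 1 N, ∑ y ∈ Finset.range (n + 1),
        binomP n θ y *
          (if (j : ℝ) / N * binomP n θ y + binomCDFpred n θ y ≤ α / 2
            then (1 : ℝ) else 0) ≤ α / 2 := by
  obtain ⟨σ, hσ⟩ := hperm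
  have hθ0 := hθ.1.le
  have hθ1 := hθ.2.le
  have hwper : ∀ r j : ℕ, w (j * N + r) = w r := by
    intro r j
    induction j with
    | zero => simp
    | succ j ih => rw [show (j + 1) * N + r = (j * N + r) + N by ring, hper, ih]
  have hmapY : ∀ k, Measure.map (Y k) P = Measure.map (Y 0) P := by
    intro k
    apply MeasureTheory.Measure.ext_of_singleton
    intro y
    rw [Measure.map_apply (hmeas k) (measurableSet_singleton y),
        Measure.map_apply (hmeas 0) (measurableSet_singleton y)]
    have e : ∀ i : ℕ, Y i ⁻¹' {y} = {ω | Y i ω = y} := fun i => rfl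
    rw [e k, e 0, hdist k y, hdist 0 y]
  have hSL : ∀ r : ℕ, ∀ᵐ ω ∂P, Tendsto
      (fun q : ℕ => ((q : ℝ))⁻¹ * ∑ j ∈ Finset.range q,
        gAux n θ α (w r) (Y (j * N + r) ω))
      atTop (nhds (pAux n θ α (w r))) := by
    intro r
    have hXmeas : ∀ j : ℕ, Measurable (fun ω => gAux n θ α (w r) (Y (j * N + r) ω)) :=
      fun j => (measurable_from_nat (f := gAux n θ α (w r))).comp (hmeas _)
    have hXint : Integrable (fun ω => gAux n θ α (w r) (Y (0 * N + r) ω)) P := by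
      apply Integrable.mono' (integrable_const (1 : ℝ))
      · exact (hXmeas 0).aestronglyMeasurable
      · filter_upwards with ω
        rw [Real.norm_eq_abs, abs_of_nonneg (gAux_nonneg _ _ _ _ _)]
        exact gAux_le_one _ _ _ _ _
    have hXindep : Pairwise (Function.onFun (IndepFun · · P)
        (fun (j : ℕ) ω => gAux n θ α (w r) (Y (j * N + r) ω))) := by
      intro i j hij
      have hne : i * N + r ≠ j * N + r := by
        intro hEq
        exact hij (Nat.eq_of_mul_eq_mul_right (by omega) (Nat.add_right_cancel hEq))
      show IndepFun (fun ω => gAux n θ α (w r) (Y (i * N + r) ω))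
        (fun ω => gAux n θ α (w r) (Y (j * N + r) ω)) P
      exact (hindep.indepFun hne).comp (measurable_from_nat (f := gAux n θ α (w r)))
        (measurable_from_nat (f := gAux n θ α (w r)))
    have hXid : ∀ i : ℕ, IdentDistrib (fun ω => gAux n θ α (w r) (Y (i * N + r) ω))
        (fun ω => gAux n θ α (w r) (Y (0 * N + r) ω)) P P := by
      intro i
      have hYid : IdentDistrib (Y (i * N + r)) (Y (0 * N + r)) P P :=
        ⟨(hmeas _).aemeasurable, (hmeas _).aemeasurable, by
          rw [hmapY (i * N + r), hmapY (0 * N + r)]⟩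
      exact hYid.comp (measurable_from_nat (f := gAux n θ α (w r)))
    have hsl := strong_law_ae (fun (j : ℕ) ω => gAux n θ α (w r) (Y (j * N + r) ω))
      hXint hXindep hXid
    have hEX : (∫ ω, gAux n θ α (w r) (Y (0 * N + r) ω) ∂P) = pAux n θ α (w r) :=
      exp_gAux P n θ α (w r) hθ0 hθ1 (Y (0 * N + r)) (hmeas _) (hdist _)
    rw [hEX] at hsl
    filter_upwards [hsl] with ω hω
    simpa [smul_eq_mul] using hω
  have hae := (MeasureTheory.ae_all_iff.mpr hSL)
  have hLeq : ∑ r ∈ Finset.range N, pAux n θ α (w r)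
      = ∑ j ∈ Finset.Icc 1 N, pAux n θ α ((j : ℝ) / N) := by
    rw [← Fin.sum_univ_eq_sum_range (fun r => pAux n θ α (w r)) N]
    calc ∑ r : Fin N, pAux n θ α (w (r : ℕ))
        = ∑ r : Fin N, pAux n θ α ((((σ r : ℕ) : ℝ) + 1) / N) := by
          refine Finset.sum_congr rfl fun r _ => ?_
          rw [hσ r]
      _ = ∑ r : Fin N, pAux n θ α ((((r : ℕ) : ℝ) + 1) / N) :=
          Equiv.sum_comp σ (fun r : Fin N => pAux n θ α ((((r : ℕ) : ℝ) + 1) / N))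
      _ = ∑ r ∈ Finset.range N, pAux n θ α (((r : ℝ) + 1) / N) :=
          Fin.sum_univ_eq_sum_range (fun r : ℕ => pAux n θ α (((r : ℝ) + 1) / N)) N
      _ = ∑ r ∈ Finset.range N, pAux n θ α (((r + 1 : ℕ) : ℝ) / N) := by
          refine Finset.sum_congr rfl fun r _ => ?_
          push_cast
          rfl
      _ = ∑ j ∈ Finset.Icc 1 N, pAux n θ α ((j : ℝ) / N) :=
          sum_shift_Icc (fun j => pAux n θ α ((j : ℝ) / N)) N
  constructor
  · filter_upwards [hae] with ω hω
    have happ := cesaro_periodic N hN (fun k => gAux n θ α (w k) (Y k ω))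
      (fun k => gAux_nonneg _ _ _ _ _) (fun k => gAux_le_one _ _ _ _ _)
      (fun r => pAux n θ α (w r))
      (fun r _hr => by
        refine (hω r).congr fun q => ?_
        congr 1
        refine Finset.sum_congr rfl fun j _ => ?_
        show gAux n θ α (w r) (Y (j * N + r) ω) = gAux n θ α (w (j * N + r)) (Y (j * N + r) ω)
        rw [hwper r j])
    rw [hLeq] at happ
    simpa only [pAux, gAux] using happ
  · exact part2_bound n N hN θ α hθ hα
end

section
/- Let n₁ and n₂ be positive coprime integers. Then the number of distinct rational values taken by y₁/n₁ + y₂/n₂, as (y₁, y₂) ranges over {0, 1, …, n₁} × {0, 1, …, n₂}, equals (n₁+1)(n₂+1) − 1; the only coincidence of values is y₁/n₁ + y₂/n₂ = 1 at both (y₁, y₂) = (n₁, 0) and (y₁, y₂) = (0, n₂). (Hence the estimator Θ̂ = (1/2)(Y₁/n₁ + Y₂/n₂) obtained by splitting n = n₁ + n₂ Bernoulli trials into two groups of relatively prime sizes takes (n₁+1)(n₂+1) − 1 possible values; e.g., 24 × 25 − 1 = 599 for n₁ = 23, n₂ = 24.) -/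
/-- For positive coprime `n₁, n₂`, the number of distinct rational values of
`y₁/n₁ + y₂/n₂` over `(y₁,y₂) ∈ {0,…,n₁} × {0,…,n₂}` is `(n₁+1)(n₂+1) - 1`; the only
coincidence of values is `y₁/n₁ + y₂/n₂ = 1` at both `(n₁,0)` and `(0,n₂)`. -/
theorem stmt_19 (n₁ n₂ : ℕ) (h₁ : 0 < n₁) (h₂ : 0 < n₂) (hco : Nat.Coprime n₁ n₂) :
    ((Finset.range (n₁ + 1) ×ˢ Finset.range (n₂ + 1)).image
        (fun p : ℕ × ℕ => (p.1 : ℚ) / n₁ + (p.2 : ℚ) / n₂)).card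
      = (n₁ + 1) * (n₂ + 1) - 1 ∧
    ∀ p ∈ Finset.range (n₁ + 1) ×ˢ Finset.range (n₂ + 1),
      ∀ q ∈ Finset.range (n₁ + 1) ×ˢ Finset.range (n₂ + 1),
        (p.1 : ℚ) / n₁ + (p.2 : ℚ) / n₂ = (q.1 : ℚ) / n₁ + (q.2 : ℚ) / n₂ →
          p = q ∨ (p = (n₁, 0) ∧ q = (0, n₂)) ∨ (p = (0, n₂) ∧ q = (n₁, 0)) := by
  have hn₁ : (n₁ : ℚ) ≠ 0 := Nat.cast_ne_zero.mpr h₁.ne'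
  have hn₂ : (n₂ : ℚ) ≠ 0 := Nat.cast_ne_zero.mpr h₂.ne'
  set S := Finset.range (n₁ + 1) ×ˢ Finset.range (n₂ + 1) with hS
  set f : ℕ × ℕ → ℚ := fun p => (p.1 : ℚ) / n₁ + (p.2 : ℚ) / n₂ with hf
  have key : ∀ p ∈ S, ∀ q ∈ S, f p = f q →
      p = q ∨ (p = (n₁, 0) ∧ q = (0, n₂)) ∨ (p = (0, n₂) ∧ q = (n₁, 0)) := by
    intro p hp q hq hfe
    simp only [hS, Finset.mem_product, Finset.mem_range, Nat.lt_succ_iff] at hp hq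
    have heq : (p.1 : ℚ) * n₂ + p.2 * n₁ = q.1 * n₂ + q.2 * n₁ := by
      simp only [hf] at hfe
      field_simp at hfe
      linarith
    have heqZ : (p.1 : ℤ) * n₂ + p.2 * n₁ = q.1 * n₂ + q.2 * n₁ := by
      exact_mod_cast heq
    have hdvd : (n₁ : ℤ) ∣ ((p.1 : ℤ) - q.1) := by
      have h1 : (n₁ : ℤ) ∣ ((p.1 : ℤ) - q.1) * n₂ := ⟨(q.2 : ℤ) - p.2, by ring_nf; linarith⟩
      have hcoZ : IsCoprime (n₁ : ℤ) (n₂ : ℤ) := Int.isCoprime_iff_gcd_eq_one.mpr hco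
      exact hcoZ.dvd_of_dvd_mul_right h1
    obtain ⟨k, hk⟩ := hdvd
    have hb1 : (p.1 : ℤ) ≤ n₁ := by exact_mod_cast hp.1
    have hb2 : (q.1 : ℤ) ≤ n₁ := by exact_mod_cast hq.1
    have hp1 : (0 : ℤ) ≤ p.1 := Int.natCast_nonneg _
    have hq1 : (0 : ℤ) ≤ q.1 := Int.natCast_nonneg _
    have hn1Z : (0 : ℤ) < n₁ := by exact_mod_cast h₁
    have hk1 : k ≤ 1 := by nlinarith
    have hk2 : -1 ≤ k := by nlinarith
    have hcancel : (q.2 : ℤ) - p.2 = k * n₂ := by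
      have h0 : (k * (n₂:ℤ) - ((q.2:ℤ) - p.2)) * n₁ = 0 := by linear_combination heqZ - hk * (n₂:ℤ)
      rcases mul_eq_zero.mp h0 with h | h
      · linarith
      · exact absurd h (by exact_mod_cast h₁.ne')
    have hb3 : (p.2 : ℤ) ≤ n₂ := by exact_mod_cast hp.2
    have hb4 : (q.2 : ℤ) ≤ n₂ := by exact_mod_cast hq.2
    have hp2 : (0 : ℤ) ≤ p.2 := Int.natCast_nonneg _
    have hq2 : (0 : ℤ) ≤ q.2 := Int.natCast_nonneg _
    have hn2Z : (0 : ℤ) < n₂ := by exact_mod_cast h₂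
    interval_cases k
    · right; right
      exact ⟨Prod.ext (by omega) (by omega), Prod.ext (by omega) (by omega)⟩
    · left
      exact Prod.ext (by omega) (by omega)
    · right; left
      exact ⟨Prod.ext (by omega) (by omega), Prod.ext (by omega) (by omega)⟩
  refine ⟨?_, key⟩
  have hmem1 : ((0 : ℕ), n₂) ∈ S := by
    simp [hS, Finset.mem_product]
  have hmem2 : ((n₁ : ℕ), (0 : ℕ)) ∈ S := by
    simp [hS, Finset.mem_product]
  have hval : f (n₁, 0) = f (0, n₂) := by
    simp [hf]
    field_simp
  have himg : (S.erase (0, n₂)).image f = S.image f := by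
    apply Finset.Subset.antisymm (Finset.image_subset_image (Finset.erase_subset _ _))
    intro x hx
    simp only [Finset.mem_image] at hx ⊢
    obtain ⟨p, hp, hfp⟩ := hx
    by_cases h : p = (0, n₂)
    · exact ⟨(n₁, 0), Finset.mem_erase.mpr ⟨by simp [Prod.ext_iff]; omega, hmem2⟩,
        by rw [hval, ← h, hfp]⟩
    · exact ⟨p, Finset.mem_erase.mpr ⟨h, hp⟩, hfp⟩
  have hinj : Set.InjOn f ↑(S.erase (0, n₂)) := by
    intro p hp q hq hfe
    simp only [Finset.coe_erase, Set.mem_diff, Finset.mem_coe, Set.mem_singleton_iff] at hp hq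
    rcases key p hp.1 q hq.1 hfe with h | ⟨h1, h2⟩ | ⟨h1, h2⟩
    · exact h
    · exact absurd h2 hq.2
    · exact absurd h1 hp.2
  rw [← himg, Finset.card_image_of_injOn hinj, Finset.card_erase_of_mem hmem1]
  simp [hS]
end
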